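/- arXiv:math/0205165 — 3 statements merged into one kernel-verified Lean document; each statement's English description precedes it below -/
import Mathlib

section
/- A cylindric shape λ[r]/μ[s] of type (k,n) is toric (i.e., the projection of its diagram to the torus Z/kZ × Z/(n-k)Z is injective) if and only if every column of its diagram contains at most k elements, and this holds if and only if every row contains at most n-k elements. -/
open Finset

/-- The set `P_{kn}` of partitions fitting in a `k × (n-k)` rectangle,
represented as antitone functions `Fin k → ℕ` bounded by `n - k`. -/
def PknFinset (k n : ℕ) : Finset (Fin k → ℕ) :=
  ((Finset.univ : Finset (Fin k → Fin (n - k + 1))).image (fun f i => (f i : ℕ))).filter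
    (fun lam => ∀ i j : Fin k, i ≤ j → lam j ≤ lam i)

/-- The 01-word of a partition `λ ∈ P_{kn}`: position `j` (0-based; 1-based `j+1`)
carries a `1` iff `j + 1 = λ_i + (k + 1 - i)` for some row `i`. -/
def omegaWord (n : ℕ) {k : ℕ} (lam : Fin k → ℕ) : Fin n → Bool :=
  fun j => decide (∃ i : Fin k, lam i + (k - (i : ℕ)) = (j : ℕ) + 1)

/-- The complement partition `λ∨`, with `λ∨_i = n - k - λ_{k+1-i}`. -/
def complP (n k : ℕ) (lam : Fin k → ℕ) : Fin k → ℕ :=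
  fun i => (n - k) - lam (Fin.rev i)

/-- Size of the Durfee square of `λ` (number of boxes on the main diagonal). -/
def diag0 {k : ℕ} (lam : Fin k → ℕ) : ℕ :=
  (Finset.univ.filter (fun i : Fin k => (i : ℕ) < lam i)).card

/-- Number of boxes of `λ` on the `i`-th diagonal. -/
def diagI {k : ℕ} (lam : Fin k → ℕ) (i : ℤ) : ℕ :=
  (Finset.univ.filter (fun a : Fin k => 0 ≤ (a : ℤ) + i ∧ (a : ℤ) + 1 + i ≤ (lam a : ℤ))).card

/-- `|λ| = λ_1 + ⋯ + λ_k`. -/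
def psize {k : ℕ} (lam : Fin k → ℕ) : ℕ := ∑ i, lam i

/-- The value at index `t` of the cylindric loop `λ[r]`: the `(k,n)`-periodic
weakly decreasing sequence with `λ[r]_{i+r} = λ_i + r` for `1 ≤ i ≤ k`. -/
def loopVal (n : ℕ) {k : ℕ} (lam : Fin k → ℕ) (r t : ℤ) : ℤ :=
  if h : 0 < k then
    (lam ⟨((t - r - 1) % (k : ℤ)).toNat, by
      have hk0 : ((k : ℤ)) ≠ 0 := by exact_mod_cast h.ne'
      have h1 : 0 ≤ (t - r - 1) % (k : ℤ) := Int.emod_nonneg _ hk0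
      have h2 : (t - r - 1) % (k : ℤ) < (k : ℤ) := Int.emod_lt_of_pos _ (by exact_mod_cast h)
      omega⟩ : ℤ) + r - ((t - r - 1) / (k : ℤ)) * ((n : ℤ) - (k : ℤ))
  else 0

/-- The cylindric diagram of shape `λ[r]/μ[s]`, as a `Shift`-invariant subset of `ℤ²`
(whose quotient modulo `(-k, n-k)ℤ` is the diagram in the cylinder). -/
def cylDiagram (n : ℕ) {k : ℕ} (lam mu : Fin k → ℕ) (r s : ℤ) : Set (ℤ × ℤ) :=
  {p | loopVal n mu s p.1 < p.2 ∧ p.2 ≤ loopVal n lam r p.1}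

/-- The cylindric shape `λ[r]/μ[s]` is toric: the projection of its diagram from the
cylinder `ℤ²/(-k, n-k)ℤ` to the torus `(ℤ/k) × (ℤ/(n-k))` is injective. -/
def IsToricShape (n : ℕ) {k : ℕ} (lam mu : Fin k → ℕ) (r s : ℤ) : Prop :=
  ∀ p q : ℤ × ℤ, p ∈ cylDiagram n lam mu r s → q ∈ cylDiagram n lam mu r s →
    (k : ℤ) ∣ (q.1 - p.1) → ((n : ℤ) - k) ∣ (q.2 - p.2) →
    ∃ m : ℤ, q.1 = p.1 - m * k ∧ q.2 = p.2 + m * ((n : ℤ) - k)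

/-- A semi-standard cylindric tableau of shape `λ/d/μ = λ[d]/μ[0]`, encoded as a
`Shift`-periodic function on `ℤ²` that is positive exactly on the diagram, weakly
increasing along rows and strictly increasing along columns. -/
def IsCylTableau (n : ℕ) {k : ℕ} (lam mu : Fin k → ℕ) (d : ℕ) (T : ℤ × ℤ → ℕ) : Prop :=
  (∀ p : ℤ × ℤ, p ∈ cylDiagram n lam mu (d : ℤ) 0 ↔ 0 < T p) ∧
  (∀ p : ℤ × ℤ, T (p.1 - (k : ℤ), p.2 + ((n : ℤ) - k)) = T p) ∧
  (∀ p : ℤ × ℤ, p ∈ cylDiagram n lam mu (d : ℤ) 0 →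
      (p.1, p.2 + 1) ∈ cylDiagram n lam mu (d : ℤ) 0 → T p ≤ T (p.1, p.2 + 1)) ∧
  (∀ p : ℤ × ℤ, p ∈ cylDiagram n lam mu (d : ℤ) 0 →
      (p.1 + 1, p.2) ∈ cylDiagram n lam mu (d : ℤ) 0 → T p < T (p.1 + 1, p.2))

/-- The number of entries of the cylindric tableau `T` equal to `c`, counted once per
`Shift`-orbit (rows `1,…,k` form a fundamental domain). -/
noncomputable def cylWeight (k : ℕ) (T : ℤ × ℤ → ℕ) (c : ℕ) : ℕ :=
  {p : ℤ × ℤ | 1 ≤ p.1 ∧ p.1 ≤ (k : ℤ) ∧ T p = c}.ncard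

/-- Number of semi-standard cylindric tableaux of shape `λ/d/μ` with weight `β`
(entries taken among `1, …, l`). -/
noncomputable def tabCount (n : ℕ) {k : ℕ} (lam mu : Fin k → ℕ) (d : ℕ) {l : ℕ} (beta : Fin l → ℕ) : ℕ :=
  {T : ℤ × ℤ → ℕ | IsCylTableau n lam mu d T ∧
    (∀ i : Fin l, cylWeight k T ((i : ℕ) + 1) = beta i) ∧
    (∀ c : ℕ, l < c → cylWeight k T c = 0)}.ncard

/-- The elementary symmetric generator `e_t` of `ℤ[q, e_1, …, e_k]` (zero out of range,
`1` for `t = 0`).  The variable `none` is the quantum parameter `q`. -/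
noncomputable def epolyZ (k : ℕ) (t : ℤ) : MvPolynomial (Option (Fin k)) ℤ :=
  if t = 0 then 1
  else if h : 0 < t ∧ t ≤ (k : ℤ) then MvPolynomial.X (some ⟨(t - 1).toNat, by omega⟩) else 0

/-- The complete homogeneous symmetric function `h_m`, expressed in the `e_i`
via the dual Jacobi–Trudi determinant. -/
noncomputable def hpolyD (k m : ℕ) : MvPolynomial (Option (Fin k)) ℤ :=
  Matrix.det (Matrix.of (fun i j : Fin m => epolyZ k (1 + (j : ℤ) - (i : ℤ))))

/-- `h_t` with the convention `h_t = 0` for `t < 0`. -/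
noncomputable def hpolyDZ (k : ℕ) (t : ℤ) : MvPolynomial (Option (Fin k)) ℤ :=
  if 0 ≤ t then hpolyD k t.toNat else 0

/-- The ideal `I_q = ⟨h_{n-k+1}, …, h_{n-1}, h_n + (-1)^k q⟩` of `ℤ[q, e_1, …, e_k]`. -/
noncomputable def qIdeal (k n : ℕ) : Ideal (MvPolynomial (Option (Fin k)) ℤ) :=
  Ideal.span ((hpolyD k '' (Set.Ioo (n - k) n)) ∪
    {hpolyD k n + ((-1) ^ k : ℤ) • MvPolynomial.X none})

/-- The quantum cohomology ring `QH*(Gr_{k,n}) = ℤ[q, e_1, …, e_k]/I_q`. -/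
abbrev QHRing (k n : ℕ) := MvPolynomial (Option (Fin k)) ℤ ⧸ qIdeal k n

/-- The class of the quantum parameter `q` in `QH*(Gr_{k,n})`. -/
noncomputable def qClass (k n : ℕ) : QHRing k n := Ideal.Quotient.mk _ (MvPolynomial.X none)

/-- The Schubert class `σ_λ ∈ QH*(Gr_{k,n})`, defined by the (quantum) Giambelli
formula `σ_λ = det(h_{λ_i + j - i})`. -/
noncomputable def sigmaClass (k n : ℕ) (lam : Fin k → ℕ) : QHRing k n :=
  Ideal.Quotient.mk _
    (Matrix.det (Matrix.of (fun i j : Fin k => hpolyDZ k ((lam i : ℤ) + (j : ℤ) - (i : ℤ)))))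

/-- The special class `h_j = σ_{(j)}`. -/
noncomputable def hClass (k n : ℕ) (j : ℕ) : QHRing k n := Ideal.Quotient.mk _ (hpolyD k j)

/-- The special class `e_j = σ_{(1^j)}`. -/
noncomputable def eClass (k n : ℕ) (j : ℕ) : QHRing k n := Ideal.Quotient.mk _ (epolyZ k (j : ℤ))

/-- The statement that `gw` is the family of structure constants (Gromov–Witten
invariants) of `QH*(Gr_{k,n})`:
`σ_μ * σ_ν = ∑_{d,λ} q^d C_{μν}^{λ,d} σ_λ` (all structure constants vanish
beyond degree `2k(n-k)`, which bounds the possible degrees). -/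
def IsGWFamily (k n : ℕ)
    (gw : (Fin k → ℕ) → (Fin k → ℕ) → (Fin k → ℕ) → ℕ → ℤ) : Prop :=
  ∀ mu nu : Fin k → ℕ, mu ∈ PknFinset k n → nu ∈ PknFinset k n →
    (sigmaClass k n mu * sigmaClass k n nu =
      ∑ e ∈ Finset.range (2 * k * (n - k) + 1), ∑ lm ∈ PknFinset k n,
        gw mu nu lm e • (qClass k n ^ e * sigmaClass k n lm)) ∧
    (∀ e lm, 2 * k * (n - k) < e → gw mu nu lm e = 0)

/-- Recover a partition in `P_{kn}` from a 01-word with `k` ones. -/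
def partOfWord (k n : ℕ) (w : Fin n → Bool) : Fin k → ℕ :=
  fun i =>
    if h : (Finset.univ.filter (fun j : Fin n => w j = true)).card = k then
      ((Finset.orderIsoOfFin _ h (Fin.rev i) : Fin n) : ℕ) + 1 - (k - (i : ℕ))
    else 0

/-- Cyclic rotation of a 01-word: `(rotWord a w)_j = w_{j+a mod n}`. -/
def rotWord (n : ℕ) (a : ℤ) (w : Fin n → Bool) : Fin n → Bool :=
  fun j =>
    if h : 0 < n then
      w ⟨(((j : ℤ) + a) % (n : ℤ)).toNat, by
        have hn0 : ((n : ℤ)) ≠ 0 := by exact_mod_cast h.ne'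
        have h1 : 0 ≤ ((j : ℤ) + a) % (n : ℤ) := Int.emod_nonneg _ hn0
        have h2 : ((j : ℤ) + a) % (n : ℤ) < (n : ℤ) := Int.emod_lt_of_pos _ (by exact_mod_cast h)
        omega⟩
    else false
  
/-- The `a`-th power of the cyclic shift `S` on `P_{kn}`:
`S^a(λ)` is the partition whose 01-word is `ω(λ)` rotated by `a`. -/
def Srot (k n : ℕ) (a : ℤ) (lam : Fin k → ℕ) : Fin k → ℕ :=
  partOfWord k n (rotWord n a (omegaWord n lam))

/-- `φ_i(λ)`: for `1 ≤ i ≤ n` the partial sum `ω_1 + ⋯ + ω_i` of the 01-word of `λ`,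
extended to all `i ∈ ℤ` by `φ_{i+n} = φ_i + k`. -/
def phi (n : ℕ) {k : ℕ} (lam : Fin k → ℕ) (i : ℤ) : ℤ :=
  ((Finset.univ.filter
      (fun j : Fin n => ((j : ℕ) : ℤ) < i % (n : ℤ) ∧ omegaWord n lam j = true)).card : ℤ)
    + (k : ℤ) * (i / (n : ℤ))

/-- `C_{λμν}(q) = ∑_e CCoef(λ,μ,ν,e) q^e`: the coefficient of `q^e` in the
Gromov–Witten generating function `q^d C^d_{λμν}` (zero unless `e` equals the
degree `d = (|λ|+|μ|+|ν|-k(n-k))/n`), where `C^d_{λμν} = C_{λμ}^{ν∨,d}`. -/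
def CCoef (k n : ℕ) (gw : (Fin k → ℕ) → (Fin k → ℕ) → (Fin k → ℕ) → ℕ → ℤ)
    (lam mu nu : Fin k → ℕ) (e : ℕ) : ℤ :=
  if ((psize lam : ℤ) + psize mu + psize nu) = (k : ℤ) * ((n : ℤ) - k) + (e : ℤ) * n then
    gw lam mu (complP n k nu) e
  else 0

section ToricAux
variable {k n : ℕ}

lemma pkn_le {lam : Fin k → ℕ} (h : lam ∈ PknFinset k n) (i : Fin k) : lam i ≤ n - k := by
  rw [PknFinset, Finset.mem_filter] at h
  obtain ⟨h1, _⟩ := h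
  rw [Finset.mem_image] at h1
  obtain ⟨f, _, hf⟩ := h1
  have := congrFun hf i
  rw [← this]
  exact Nat.lt_succ_iff.mp (f i).isLt

lemma pkn_anti {lam : Fin k → ℕ} (h : lam ∈ PknFinset k n) {i j : Fin k} (hij : i ≤ j) :
    lam j ≤ lam i := by
  rw [PknFinset, Finset.mem_filter] at h
  exact h.2 i j hij

lemma loopVal_eq (hk : 0 < k) (lam : Fin k → ℕ) (r t m : ℤ) (i : Fin k)
    (h : t - r - 1 = m * (k:ℤ) + (i:ℤ)) :
    loopVal n lam r t = (lam i : ℤ) + r - m * ((n:ℤ) - (k:ℤ)) := by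
  have hk' : ((k:ℤ)) ≠ 0 := by exact_mod_cast hk.ne'
  have hi0 : (0:ℤ) ≤ (i:ℤ) := Int.natCast_nonneg _
  have hik : ((i:ℤ)) < (k:ℤ) := by exact_mod_cast i.isLt
  have he : (t - r - 1) % (k:ℤ) = (i:ℤ) := by
    rw [h, show m * (k:ℤ) + (i:ℤ) = (i:ℤ) + m * k by ring, Int.add_mul_emod_self_right]
    exact Int.emod_eq_of_lt hi0 hik
  have hd : (t - r - 1) / (k:ℤ) = m := by
    rw [h, show m * (k:ℤ) + (i:ℤ) = (i:ℤ) + m * k by ring,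
      Int.add_mul_ediv_right _ _ hk', Int.ediv_eq_zero_of_lt hi0 hik, zero_add]
  have ht : ((t - r - 1) % (k:ℤ)).toNat = (i:ℕ) := by omega
  simp only [loopVal, dif_pos hk, hd]
  have key : ∀ (j : Fin k), j = i →
      ((lam j : ℤ) + r - m * ((n:ℤ)-k) = (lam i:ℤ) + r - m * ((n:ℤ)-k)) := by
    rintro j rfl; rfl
  exact key _ (Fin.ext ht)

lemma loopVal_decomp (hk : 0 < k) (lam : Fin k → ℕ) (r t : ℤ) :
    ∃ (m : ℤ) (i : Fin k), t - r - 1 = m * (k:ℤ) + (i:ℤ) ∧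
      loopVal n lam r t = (lam i : ℤ) + r - m * ((n:ℤ) - (k:ℤ)) := by
  have hk' : (0:ℤ) < (k:ℤ) := by exact_mod_cast hk
  have h1 : 0 ≤ (t - r - 1) % (k:ℤ) := Int.emod_nonneg _ hk'.ne'
  have h2 : (t - r - 1) % (k:ℤ) < (k:ℤ) := Int.emod_lt_of_pos _ hk'
  refine ⟨(t - r - 1) / k, ⟨((t - r - 1) % (k : ℤ)).toNat, by omega⟩, ?_, ?_⟩
  · show t - r - 1 = _ * (k:ℤ) + ((((t - r - 1) % (k : ℤ)).toNat : ℕ) : ℤ)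
    rw [Int.toNat_of_nonneg h1]
    have := Int.mul_ediv_add_emod (t - r - 1) (k:ℤ)
    linarith
  · apply loopVal_eq hk
    show t - r - 1 = _ * (k:ℤ) + ((((t - r - 1) % (k : ℤ)).toNat : ℕ) : ℤ)
    rw [Int.toNat_of_nonneg h1]
    have := Int.mul_ediv_add_emod (t - r - 1) (k:ℤ)
    linarith

lemma loopVal_anti (hk : 0 < k) (hkn : k ≤ n) {lam : Fin k → ℕ}
    (hb : ∀ i, lam i ≤ n - k) (ha : ∀ i j : Fin k, i ≤ j → lam j ≤ lam i)
    (r : ℤ) {t u : ℤ} (htu : t ≤ u) :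
    loopVal n lam r u ≤ loopVal n lam r t := by
  obtain ⟨m1, i1, h1, e1⟩ := loopVal_decomp (n := n) hk lam r t
  obtain ⟨m2, i2, h2, e2⟩ := loopVal_decomp (n := n) hk lam r u
  rw [e1, e2]
  have hk' : (0:ℤ) < (k:ℤ) := by exact_mod_cast hk
  have hi1a : (0:ℤ) ≤ (i1:ℤ) := Int.natCast_nonneg _
  have hi2a : (0:ℤ) ≤ (i2:ℤ) := Int.natCast_nonneg _
  have hi1b : ((i1:ℤ)) < (k:ℤ) := by exact_mod_cast i1.isLt
  have hi2b : ((i2:ℤ)) < (k:ℤ) := by exact_mod_cast i2.isLt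
  have hm : m1 ≤ m2 := by
    by_contra hcon
    push_neg at hcon
    have hmul : (m2 + 1) * (k:ℤ) ≤ m1 * k :=
      mul_le_mul_of_nonneg_right (by omega) hk'.le
    rw [add_mul, one_mul] at hmul
    linarith
  rcases eq_or_lt_of_le hm with heq | hlt
  · subst heq
    have hii : (i1:ℤ) ≤ (i2:ℤ) := by linarith
    have hle : lam i2 ≤ lam i1 := ha _ _ (by rw [Fin.le_def]; exact_mod_cast hii)
    have hc : (lam i2 : ℤ) ≤ (lam i1 : ℤ) := by exact_mod_cast hle
    linarith
  · have hb2 : (lam i2 : ℤ) ≤ (n:ℤ) - k := by have := hb i2; omega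
    have hb1 : (0:ℤ) ≤ (lam i1:ℤ) := Int.natCast_nonneg _
    have hnk : (0:ℤ) ≤ (n:ℤ) - k := by omega
    have hmul : ((n:ℤ) - k) ≤ (m2 - m1) * ((n:ℤ) - k) :=
      le_mul_of_one_le_left hnk (by omega)
    have hsm := sub_mul m2 m1 ((n:ℤ) - k)
    linarith

lemma loopVal_shift (hk : 0 < k) (lam : Fin k → ℕ) (r t c : ℤ) :
    loopVal n lam r (t + c * k) = loopVal n lam r t - c * ((n:ℤ) - k) := by
  obtain ⟨m, i, h1, e1⟩ := loopVal_decomp (n := n) hk lam r t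
  have h2 : (t + c * k) - r - 1 = (m + c) * (k:ℤ) + (i:ℤ) := by
    rw [add_mul]; linarith
  rw [loopVal_eq hk lam r _ _ i h2, e1]
  ring

lemma mem_shift (hk : 0 < k) {lam mu : Fin k → ℕ} {r s : ℤ} {p : ℤ × ℤ} (c : ℤ)
    (hp : p ∈ cylDiagram n lam mu r s) :
    ((p.1 + c * k, p.2 - c * ((n:ℤ) - k)) : ℤ × ℤ) ∈ cylDiagram n lam mu r s := by
  simp only [cylDiagram, Set.mem_setOf_eq] at hp ⊢
  rw [loopVal_shift hk, loopVal_shift hk]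
  constructor <;> linarith [hp.1, hp.2]

lemma col_bounds (hk : 0 < k) (hkn : k < n) {lam mu : Fin k → ℕ}
    (hbl : ∀ i, lam i ≤ n - k) (hal : ∀ i j : Fin k, i ≤ j → lam j ≤ lam i)
    (hbm : ∀ i, mu i ≤ n - k) (ham : ∀ i j : Fin k, i ≤ j → mu j ≤ mu i)
    (r s q : ℤ) :
    ∃ A B : ℤ, ∀ i : ℤ, ((i, q) : ℤ × ℤ) ∈ cylDiagram n lam mu r s → B ≤ i ∧ i ≤ A := by
  set M := max (loopVal n lam r (r+1) - q + 1) 1 with hM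
  set M' := max (q - loopVal n mu s (s+1)) 1 with hM'
  have hM1 : (1:ℤ) ≤ M := le_max_right _ _
  have hM1' : (1:ℤ) ≤ M' := le_max_right _ _
  have hM2 : loopVal n lam r (r+1) - q + 1 ≤ M := le_max_left _ _
  have hM2' : q - loopVal n mu s (s+1) ≤ M' := le_max_left _ _
  have hkn' : (1:ℤ) ≤ (n:ℤ) - k := by omega
  refine ⟨r + 1 + M * k, s + 1 + (-M') * k, ?_⟩
  intro i hi
  simp only [cylDiagram, Set.mem_setOf_eq] at hi
  obtain ⟨hif, hig⟩ := hi
  constructor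
  · by_contra hcon
    push_neg at hcon
    have hanti : loopVal n mu s (s + 1 + (-M') * k) ≤ loopVal n mu s i :=
      loopVal_anti hk (le_of_lt hkn) hbm ham s (by linarith)
    rw [loopVal_shift hk] at hanti
    have h1 : (M' : ℤ) * 1 ≤ M' * ((n:ℤ) - k) :=
      mul_le_mul_of_nonneg_left hkn' (by linarith)
    have h2 : (-M') * ((n:ℤ)-k) = -(M' * ((n:ℤ)-k)) := by ring
    linarith
  · by_contra hcon
    push_neg at hcon
    have hanti : loopVal n lam r i ≤ loopVal n lam r (r + 1 + M * k) :=
      loopVal_anti hk (le_of_lt hkn) hbl hal r (by linarith)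
    rw [loopVal_shift hk] at hanti
    have h1 : (M : ℤ) * 1 ≤ M * ((n:ℤ) - k) :=
      mul_le_mul_of_nonneg_left hkn' (by linarith)
    linarith

end ToricAux
/-- A cylindric shape `λ[r]/μ[s]` of type `(k,n)` is toric iff every column of its
diagram has at most `k` elements, iff every row has at most `n - k` elements. -/
theorem isToricShape_iff_columns_iff_rows (k n : ℕ) (hk : 1 ≤ k) (hkn : k < n)
    (lam mu : Fin k → ℕ) (hlam : lam ∈ PknFinset k n) (hmu : mu ∈ PknFinset k n)
    (r s : ℤ) :
    (IsToricShape n lam mu r s ↔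
      ∀ q : ℤ, {i : ℤ | (i, q) ∈ cylDiagram n lam mu r s}.Finite ∧
        {i : ℤ | (i, q) ∈ cylDiagram n lam mu r s}.ncard ≤ k) ∧
    (IsToricShape n lam mu r s ↔
      ∀ p : ℤ, {j : ℤ | (p, j) ∈ cylDiagram n lam mu r s}.Finite ∧
        {j : ℤ | (p, j) ∈ cylDiagram n lam mu r s}.ncard ≤ n - k) := by
  have hk0 : 0 < k := hk
  have hbl := pkn_le hlam
  have hal : ∀ i j : Fin k, i ≤ j → lam j ≤ lam i := fun i j h => pkn_anti hlam h
  have hbm := pkn_le hmu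
  have ham : ∀ i j : Fin k, i ≤ j → mu j ≤ mu i := fun i j h => pkn_anti hmu h
  have hknz : ((n:ℤ) - k) ≠ 0 := by omega
  have hkz : ((k:ℤ)) ≠ 0 := by omega
  -- column finiteness
  have colfin : ∀ q : ℤ, {i : ℤ | (i, q) ∈ cylDiagram n lam mu r s}.Finite := by
    intro q
    obtain ⟨A, B, hAB⟩ := col_bounds hk0 hkn hbl hal hbm ham r s q
    exact (Set.finite_Icc B A).subset (fun i hi => Set.mem_Icc.mpr (hAB i hi))
  -- column convexity
  have colconv : ∀ q i j l : ℤ, i ≤ j → j ≤ l → ((i, q) : ℤ × ℤ) ∈ cylDiagram n lam mu r s →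
      ((l, q) : ℤ × ℤ) ∈ cylDiagram n lam mu r s →
      ((j, q) : ℤ × ℤ) ∈ cylDiagram n lam mu r s := by
    intro q i j l hij hjl hi hl
    simp only [cylDiagram, Set.mem_setOf_eq] at hi hl ⊢
    exact ⟨lt_of_le_of_lt (loopVal_anti hk0 hkn.le hbm ham s hij) hi.1,
      le_trans hl.2 (loopVal_anti hk0 hkn.le hbl hal r hjl)⟩
  -- row description
  have rowdesc : ∀ p : ℤ, {j : ℤ | (p, j) ∈ cylDiagram n lam mu r s} =
      Set.Ioc (loopVal n mu s p) (loopVal n lam r p) := by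
    intro p; ext j
    simp [cylDiagram, Set.mem_Ioc]
  -- toric forbids a vertical pair at distance k in the same column
  have colpair : ∀ i q : ℤ, ((i, q) : ℤ × ℤ) ∈ cylDiagram n lam mu r s →
      ((i + (k:ℤ), q) : ℤ × ℤ) ∈ cylDiagram n lam mu r s → ¬ IsToricShape n lam mu r s := by
    intro i q h1 h2 htor
    obtain ⟨m, hm1, hm2⟩ := htor (i, q) (i + (k:ℤ), q) h1 h2 ⟨1, by ring⟩ ⟨0, by ring⟩
    have hm1' : i + (k:ℤ) = i - m * k := hm1
    have hm2' : q = q + m * ((n:ℤ) - k) := hm2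
    have hm0 : m = 0 := by
      rcases mul_eq_zero.mp (show m * ((n:ℤ) - k) = 0 by linarith) with h | h
      · exact h
      · exact absurd h hknz
    rw [hm0, zero_mul] at hm1'
    omega
  have rowpair : ∀ i q : ℤ, ((i, q) : ℤ × ℤ) ∈ cylDiagram n lam mu r s →
      ((i, q + ((n:ℤ) - k)) : ℤ × ℤ) ∈ cylDiagram n lam mu r s →
      ¬ IsToricShape n lam mu r s := by
    intro i q h1 h2 htor
    obtain ⟨m, hm1, hm2⟩ := htor (i, q) (i, q + ((n:ℤ) - k)) h1 h2 ⟨0, by ring⟩ ⟨1, by ring⟩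
    have hm1' : i = i - m * (k:ℤ) := hm1
    have hm2' : q + ((n:ℤ) - k) = q + m * ((n:ℤ) - k) := hm2
    have hm0 : m = 0 := by
      rcases mul_eq_zero.mp (show m * (k:ℤ) = 0 by linarith) with h | h
      · exact h
      · exact absurd h hkz
    rw [hm0, zero_mul] at hm2'
    omega
  -- toric → columns bounded
  have toric_col : IsToricShape n lam mu r s → ∀ q : ℤ,
      {i : ℤ | (i, q) ∈ cylDiagram n lam mu r s}.ncard ≤ k := by
    intro htor q
    by_contra hcon
    push_neg at hcon
    have hfin := colfin q
    set S := {i : ℤ | (i, q) ∈ cylDiagram n lam mu r s} with hS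
    have hFne : hfin.toFinset.Nonempty := by
      rw [Set.Finite.toFinset_nonempty]
      exact Set.nonempty_of_ncard_ne_zero (by omega)
    set a := hfin.toFinset.min' hFne with ha
    set b := hfin.toFinset.max' hFne with hb
    have haS : a ∈ S := (Set.Finite.mem_toFinset hfin).mp (hfin.toFinset.min'_mem hFne)
    have hbS : b ∈ S := (Set.Finite.mem_toFinset hfin).mp (hfin.toFinset.max'_mem hFne)
    have hsub : S ⊆ Set.Icc a b := by
      intro x hx
      have hx' : x ∈ hfin.toFinset := (Set.Finite.mem_toFinset hfin).mpr hx
      exact Set.mem_Icc.mpr ⟨hfin.toFinset.min'_le x hx', hfin.toFinset.le_max' x hx'⟩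
    have hcard : S.ncard ≤ (b + 1 - a).toNat := by
      calc S.ncard ≤ (Set.Icc a b).ncard := Set.ncard_le_ncard hsub (Set.finite_Icc a b)
      _ = (b + 1 - a).toNat := by rw [← Finset.coe_Icc, Set.ncard_coe_finset, Int.card_Icc]
    have hak : a + (k:ℤ) ≤ b := by omega
    have haD : ((a, q) : ℤ × ℤ) ∈ cylDiagram n lam mu r s := haS
    have hbD : ((b, q) : ℤ × ℤ) ∈ cylDiagram n lam mu r s := hbS
    have hmem : ((a + (k:ℤ), q) : ℤ × ℤ) ∈ cylDiagram n lam mu r s :=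
      colconv q a (a + (k:ℤ)) b (by omega) hak haD hbD
    exact colpair a q haD hmem htor
  -- columns bounded → toric
  have col_toric : (∀ q : ℤ, {i : ℤ | (i, q) ∈ cylDiagram n lam mu r s}.ncard ≤ k) →
      IsToricShape n lam mu r s := by
    intro hcol p u hp hu hd1 hd2
    obtain ⟨m, hm⟩ := hd2
    have hu' := mem_shift hk0 m hu
    have hq2 : u.2 - m * ((n:ℤ) - (k:ℤ)) = p.2 := by linarith
    rw [hq2] at hu'
    obtain ⟨c, hc⟩ := hd1
    have hdvd : u.1 + m * (k:ℤ) - p.1 = (k:ℤ) * (c + m) := by rw [mul_add]; linarith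
    have hpD : ((p.1, p.2) : ℤ × ℤ) ∈ cylDiagram n lam mu r s := by
      rw [show ((p.1, p.2) : ℤ × ℤ) = p from rfl]; exact hp
    have hx : u.1 + m * (k:ℤ) = p.1 := by
      by_contra hne
      have hc0 : c + m ≠ 0 := by
        intro h; rw [h, mul_zero] at hdvd; omega
      rcases lt_or_gt_of_ne hc0 with h | h
      · have hmul : (k:ℤ) * (c + m) ≤ (k:ℤ) * (-1) :=
          mul_le_mul_of_nonneg_left (by omega) (by omega)
        have hxk : u.1 + m * (k:ℤ) + (k:ℤ) ≤ p.1 := by linarith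
        have hIc : Set.Icc (u.1 + m * (k:ℤ)) p.1 ⊆
            {i : ℤ | (i, p.2) ∈ cylDiagram n lam mu r s} := by
          intro y hy
          exact colconv p.2 _ y p.1 (Set.mem_Icc.mp hy).1 (Set.mem_Icc.mp hy).2 hu' hpD
        have hcard : (p.1 + 1 - (u.1 + m * (k:ℤ))).toNat ≤ k := by
          calc (p.1 + 1 - (u.1 + m * (k:ℤ))).toNat
              = (Set.Icc (u.1 + m * (k:ℤ)) p.1).ncard := by
                rw [← Finset.coe_Icc, Set.ncard_coe_finset, Int.card_Icc]
          _ ≤ _ := Set.ncard_le_ncard hIc (colfin p.2)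
          _ ≤ k := hcol p.2
        omega
      · have hmul : (k:ℤ) * 1 ≤ (k:ℤ) * (c + m) :=
          mul_le_mul_of_nonneg_left (by omega) (by omega)
        have hxk : p.1 + (k:ℤ) ≤ u.1 + m * (k:ℤ) := by linarith
        have hIc : Set.Icc p.1 (u.1 + m * (k:ℤ)) ⊆
            {i : ℤ | (i, p.2) ∈ cylDiagram n lam mu r s} := by
          intro y hy
          exact colconv p.2 p.1 y _ (Set.mem_Icc.mp hy).1 (Set.mem_Icc.mp hy).2 hpD hu'
        have hcard : (u.1 + m * (k:ℤ) + 1 - p.1).toNat ≤ k := by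
          calc (u.1 + m * (k:ℤ) + 1 - p.1).toNat
              = (Set.Icc p.1 (u.1 + m * (k:ℤ))).ncard := by
                rw [← Finset.coe_Icc, Set.ncard_coe_finset, Int.card_Icc]
          _ ≤ _ := Set.ncard_le_ncard hIc (colfin p.2)
          _ ≤ k := hcol p.2
        omega
    exact ⟨m, by linarith, by linarith⟩
  -- toric → rows bounded
  have toric_row : IsToricShape n lam mu r s → ∀ p : ℤ,
      {j : ℤ | (p, j) ∈ cylDiagram n lam mu r s}.ncard ≤ n - k := by
    intro htor p
    by_contra hcon
    push_neg at hcon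
    rw [rowdesc p, ← Finset.coe_Ioc, Set.ncard_coe_finset, Int.card_Ioc] at hcon
    have h1 : ((p, loopVal n mu s p + 1) : ℤ × ℤ) ∈ cylDiagram n lam mu r s := by
      simp only [cylDiagram, Set.mem_setOf_eq]
      constructor <;> omega
    have h2 : ((p, loopVal n mu s p + 1 + ((n:ℤ) - k)) : ℤ × ℤ) ∈ cylDiagram n lam mu r s := by
      simp only [cylDiagram, Set.mem_setOf_eq]
      constructor <;> omega
    exact rowpair p (loopVal n mu s p + 1) h1 h2 htor
  -- rows bounded → toric
  have row_toric : (∀ p : ℤ, {j : ℤ | (p, j) ∈ cylDiagram n lam mu r s}.ncard ≤ n - k) →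
      IsToricShape n lam mu r s := by
    intro hrow p u hp hu hd1 hd2
    obtain ⟨c, hc⟩ := hd1
    have hu' := mem_shift hk0 (-c) hu
    have h1 : u.1 + (-c) * (k:ℤ) = p.1 := by linarith
    rw [h1] at hu'
    obtain ⟨e, he⟩ := hd2
    have hpD : ((p.1, p.2) : ℤ × ℤ) ∈ cylDiagram n lam mu r s := by
      rw [show ((p.1, p.2) : ℤ × ℤ) = p from rfl]; exact hp
    have hp2 : loopVal n mu s p.1 < p.2 ∧ p.2 ≤ loopVal n lam r p.1 := hpD
    have hx2 : loopVal n mu s p.1 < u.2 - (-c) * ((n:ℤ) - (k:ℤ)) ∧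
        u.2 - (-c) * ((n:ℤ) - (k:ℤ)) ≤ loopVal n lam r p.1 := hu'
    have hrowp := hrow p.1
    rw [rowdesc p.1, ← Finset.coe_Ioc, Set.ncard_coe_finset, Int.card_Ioc] at hrowp
    have hdvd : u.2 - (-c) * ((n:ℤ) - (k:ℤ)) - p.2 = ((n:ℤ) - k) * (e + c) := by
      rw [mul_add]; linarith
    have hx : u.2 - (-c) * ((n:ℤ) - (k:ℤ)) = p.2 := by
      by_contra hne
      have hc0 : e + c ≠ 0 := by
        intro h; rw [h, mul_zero] at hdvd; omega
      rcases lt_or_gt_of_ne hc0 with h | h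
      · have hmul : ((n:ℤ) - k) * (e + c) ≤ ((n:ℤ) - k) * (-1) :=
          mul_le_mul_of_nonneg_left (by omega) (by omega)
        have hgap : ((n:ℤ) - k) ≤ p.2 - (u.2 - (-c) * ((n:ℤ) - (k:ℤ))) := by linarith
        omega
      · have hmul : ((n:ℤ) - k) * 1 ≤ ((n:ℤ) - k) * (e + c) :=
          mul_le_mul_of_nonneg_left (by omega) (by omega)
        have hgap : ((n:ℤ) - k) ≤ u.2 - (-c) * ((n:ℤ) - (k:ℤ)) - p.2 := by linarith
        omega
    exact ⟨-c, by linarith, by linarith⟩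
  constructor
  · constructor
    · intro htor q
      exact ⟨colfin q, toric_col htor q⟩
    · intro h
      exact col_toric (fun q => (h q).2)
  · constructor
    · intro htor p
      refine ⟨?_, toric_row htor p⟩
      rw [rowdesc p]
      exact Set.finite_Ioc _ _
    · intro h
      exact row_toric (fun p => (h p).2)
end

section
/- The quantum Kostka numbers K^β_{λ/d/μ} are invariant under any permutation of the entries of the weight vector β. -/
open Finset

namespace QKaux

open scoped Classical

/-! ### Counting lemma: ranks in a finite set of integers -/

lemma rank_count (S : Finset ℤ) (m : ℕ) :
    (S.filter fun x => (S.filter (· ≤ x)).card ≤ m).card = min m S.card := by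
  induction S using Finset.induction_on_max with
  | empty => simp
  | insert a s ha ih =>
    have hans : a ∉ s := fun h => absurd (ha a h) (lt_irrefl a)
    have key : ∀ x ∈ s, ((insert a s).filter (· ≤ x)).card = (s.filter (· ≤ x)).card := by
      intro x hx
      congr 1
      rw [Finset.filter_insert, if_neg (by exact not_le.2 (ha x hx))]
    have keya : ((insert a s).filter (· ≤ a)).card = s.card + 1 := by
      rw [Finset.filter_insert, if_pos le_rfl]
      rw [Finset.card_insert_of_notMem (fun h => hans (Finset.mem_of_mem_filter a h))]
      congr 1
      rw [Finset.filter_true_of_mem (fun x hx => le_of_lt (ha x hx))]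
    have hfil : (insert a s).filter (fun x => ((insert a s).filter (· ≤ x)).card ≤ m)
        = (if s.card + 1 ≤ m then {a} else ∅) ∪ (s.filter fun x => (s.filter (· ≤ x)).card ≤ m) := by
      ext x
      simp only [Finset.mem_filter, Finset.mem_insert, Finset.mem_union]
      constructor
      · rintro ⟨hx | hx, hc⟩
        · subst hx
          rw [keya] at hc
          left; simp [hc]
        · right
          rw [key x hx] at hc
          exact ⟨hx, by simpa using hc⟩
      · rintro (hx | hx)
        · split at hx
          · simp only [Finset.mem_singleton] at hx
            subst hx
            exact ⟨Or.inl rfl, by rw [keya]; assumption⟩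
          · simp at hx
        · exact ⟨Or.inr hx.1, by rw [key x hx.1]; simpa using hx.2⟩
    rw [hfil]
    have hdisj : Disjoint (if s.card + 1 ≤ m then ({a} : Finset ℤ) else ∅)
        (s.filter fun x => (s.filter (· ≤ x)).card ≤ m) := by
      split
      · simp only [Finset.disjoint_singleton_left]
        intro h
        exact hans (Finset.mem_of_mem_filter a h)
      · exact Finset.disjoint_empty_left _
    rw [Finset.card_union_of_disjoint hdisj, ih, Finset.card_insert_of_notMem hans]
    split <;> rename_i h <;> simp <;> omega


/-! ### Basic facts about `PknFinset` and `loopVal` -/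

lemma pkn_le {k n : ℕ} {lam : Fin k → ℕ} (h : lam ∈ PknFinset k n) (i : Fin k) :
    lam i ≤ n - k := by
  rcases Finset.mem_filter.mp h with ⟨h1, _⟩
  rcases Finset.mem_image.mp h1 with ⟨f, _, hf⟩
  have : lam i = (f i : ℕ) := by rw [← hf]
  rw [this]
  have := (f i).isLt
  omega

lemma pkn_anti {k n : ℕ} {lam : Fin k → ℕ} (h : lam ∈ PknFinset k n) :
    ∀ i j : Fin k, i ≤ j → lam j ≤ lam i :=
  (Finset.mem_filter.mp h).2

lemma loopVal_formula {k : ℕ} (hk : 0 < k) (n : ℕ) (lam : Fin k → ℕ) (r t m q : ℤ)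
    (hm0 : 0 ≤ m) (hmk : m < (k : ℤ)) (hq : t - r - 1 = (k : ℤ) * q + m) :
    loopVal n lam r t = (lam ⟨m.toNat, by omega⟩ : ℤ) + r - q * ((n : ℤ) - (k : ℤ)) := by
  have hb : (0 : ℤ) < (k : ℤ) := by exact_mod_cast hk
  have huniq := (Int.ediv_emod_unique (a := t - r - 1) (b := (k : ℤ)) (r := m) (q := q) hb).mpr
    ⟨by omega, hm0, hmk⟩
  rw [loopVal, dif_pos hk]
  have hfin : (⟨((t - r - 1) % (k : ℤ)).toNat, by
      have h1 : 0 ≤ (t - r - 1) % (k : ℤ) := Int.emod_nonneg _ (by exact_mod_cast hk.ne')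
      have h2 : (t - r - 1) % (k : ℤ) < (k : ℤ) := Int.emod_lt_of_pos _ hb
      omega⟩ : Fin k) = ⟨m.toNat, by omega⟩ := by
    apply Fin.ext
    simp [huniq.2]
  rw [hfin]
  linear_combination (-((n : ℤ) - (k : ℤ))) * huniq.1

lemma loopVal_shift {k : ℕ} (hk : 0 < k) (n : ℕ) (lam : Fin k → ℕ) (r t : ℤ) :
    loopVal n lam r (t - (k : ℤ)) = loopVal n lam r t + ((n : ℤ) - (k : ℤ)) := by
  have hb : (0 : ℤ) < (k : ℤ) := by exact_mod_cast hk
  set m := (t - r - 1) % (k : ℤ) with hm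
  set q := (t - r - 1) / (k : ℤ) with hqd
  have hm0 : 0 ≤ m := Int.emod_nonneg _ hb.ne'
  have hmk : m < (k : ℤ) := Int.emod_lt_of_pos _ hb
  have hq : t - r - 1 = (k : ℤ) * q + m := by
    rw [hm, hqd]; have := Int.emod_add_mul_ediv (t - r - 1) (k : ℤ); omega
  rw [loopVal_formula hk n lam r t m q hm0 hmk hq,
    loopVal_formula hk n lam r (t - k) m (q - 1) hm0 hmk (by linear_combination hq)]
  ring

lemma loopVal_anti_step {k n : ℕ} (hk : 0 < k) (hkn : k < n) {lam : Fin k → ℕ}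
    (hlam : lam ∈ PknFinset k n) (r t : ℤ) :
    loopVal n lam r (t + 1) ≤ loopVal n lam r t := by
  have hb : (0 : ℤ) < (k : ℤ) := by exact_mod_cast hk
  set m := (t - r - 1) % (k : ℤ) with hmd
  set q := (t - r - 1) / (k : ℤ) with hqd
  have hm0 : 0 ≤ m := Int.emod_nonneg _ hb.ne'
  have hmk : m < (k : ℤ) := Int.emod_lt_of_pos _ hb
  have hq : t - r - 1 = (k : ℤ) * q + m := by
    rw [hmd, hqd]; have := Int.emod_add_mul_ediv (t - r - 1) (k : ℤ); omega
  rw [loopVal_formula hk n lam r t m q hm0 hmk hq]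
  by_cases hcase : m + 1 < (k : ℤ)
  · rw [loopVal_formula hk n lam r (t + 1) (m + 1) q (by omega) hcase (by omega)]
    have hle : lam ⟨(m + 1).toNat, by omega⟩ ≤ lam ⟨m.toNat, by omega⟩ := by
      apply pkn_anti hlam
      simp only [Fin.mk_le_mk]
      omega
    have : ((lam ⟨(m + 1).toNat, by omega⟩ : ℕ) : ℤ) ≤ (lam ⟨m.toNat, by omega⟩ : ℤ) := by
      exact_mod_cast hle
    omega
  · have hmeq : m = (k : ℤ) - 1 := by omega
    rw [loopVal_formula hk n lam r (t + 1) 0 (q + 1) le_rfl hb (by linear_combination hq + hmeq)]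
    have h1 : (lam ⟨(0 : ℤ).toNat, by omega⟩ : ℕ) ≤ n - k := pkn_le hlam _
    have h2 : ((lam ⟨(0 : ℤ).toNat, by omega⟩ : ℕ) : ℤ) ≤ (n : ℤ) - (k : ℤ) := by
      have : ((n - k : ℕ) : ℤ) = (n : ℤ) - (k : ℤ) := by omega
      omega
    have h3 : (0 : ℤ) ≤ (lam ⟨m.toNat, by omega⟩ : ℤ) := by positivity
    linarith [h2, h3]

lemma loopVal_anti {k n : ℕ} (hk : 0 < k) (hkn : k < n) {lam : Fin k → ℕ}
    (hlam : lam ∈ PknFinset k n) (r : ℤ) {t t' : ℤ} (h : t ≤ t') :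
    loopVal n lam r t' ≤ loopVal n lam r t := by
  refine Int.le_induction (m := t) (motive := fun s _ => loopVal n lam r s ≤ loopVal n lam r t)
    (le_refl _) (fun s _ ih => le_trans (loopVal_anti_step hk hkn hlam r s) ih) t' h

/-! ### Diagram and tableau basics -/

lemma mem_cylD {k n : ℕ} {lam mu : Fin k → ℕ} {r s : ℤ} {p : ℤ × ℤ} :
    p ∈ cylDiagram n lam mu r s ↔
      loopVal n mu s p.1 < p.2 ∧ p.2 ≤ loopVal n lam r p.1 := Iff.rfl

lemma cylD_shift {k n : ℕ} (hk : 0 < k) {lam mu : Fin k → ℕ} {r s : ℤ} (p : ℤ × ℤ) :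
    (p.1 - (k : ℤ), p.2 + ((n : ℤ) - (k : ℤ))) ∈ cylDiagram n lam mu r s ↔
      p ∈ cylDiagram n lam mu r s := by
  simp only [mem_cylD, loopVal_shift hk]
  omega

section Tab

variable {k n : ℕ} {lam mu : Fin k → ℕ} {d : ℕ} {T : ℤ × ℤ → ℕ}

lemma T_zero (hT : IsCylTableau n lam mu d T) {p : ℤ × ℤ}
    (hp : p ∉ cylDiagram n lam mu (d : ℤ) 0) : T p = 0 := by
  by_contra h
  exact hp ((hT.1 p).mpr (Nat.pos_of_ne_zero h))

lemma mem_of_T_eq (hT : IsCylTableau n lam mu d T) {p : ℤ × ℤ} {c : ℕ}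
    (hp : T p = c) (hc : 1 ≤ c) : p ∈ cylDiagram n lam mu (d : ℤ) 0 :=
  (hT.1 p).mpr (by omega)

lemma row_cell_mem (hT : IsCylTableau n lam mu d T) {r c1 c2 c : ℤ}
    (h1 : (r, c1) ∈ cylDiagram n lam mu (d : ℤ) 0)
    (h2 : (r, c2) ∈ cylDiagram n lam mu (d : ℤ) 0)
    (hc : c1 ≤ c ∧ c ≤ c2) : (r, c) ∈ cylDiagram n lam mu (d : ℤ) 0 := by
  rcases mem_cylD.mp h1 with ⟨a1, b1⟩
  rcases mem_cylD.mp h2 with ⟨a2, b2⟩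
  exact mem_cylD.mpr ⟨by simp at a1 a2 ⊢; omega, by simp at b1 b2 ⊢; omega⟩

lemma row_mono (hT : IsCylTableau n lam mu d T) {r c1 c2 : ℤ}
    (h1 : (r, c1) ∈ cylDiagram n lam mu (d : ℤ) 0)
    (h2 : (r, c2) ∈ cylDiagram n lam mu (d : ℤ) 0)
    (hc : c1 ≤ c2) : T (r, c1) ≤ T (r, c2) := by
  refine Int.le_induction (m := c1)
    (motive := fun c _ => (r, c) ∈ cylDiagram n lam mu (d : ℤ) 0 → T (r, c1) ≤ T (r, c)) ?_ ?_ c2 hc h2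
  · intro _; exact le_refl _
  · intro c hc1 ih hmem
    have hcmem : (r, c) ∈ cylDiagram n lam mu (d : ℤ) 0 :=
      row_cell_mem hT h1 hmem ⟨hc1, by omega⟩
    exact le_trans (ih hcmem) (hT.2.2.1 (r, c) hcmem hmem)

lemma col_strict (hT : IsCylTableau n lam mu d T) {r c : ℤ}
    (h1 : (r, c) ∈ cylDiagram n lam mu (d : ℤ) 0)
    (h2 : (r + 1, c) ∈ cylDiagram n lam mu (d : ℤ) 0) : T (r, c) < T (r + 1, c) :=
  hT.2.2.2 (r, c) h1 h2

end Tab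

/-! ### Bender–Knuth free/locked cells -/

def FreeI (T : ℤ × ℤ → ℕ) (v : ℕ) (p : ℤ × ℤ) : Prop :=
  T p = v ∧ T (p.1 + 1, p.2) ≠ v + 1

def FreeJ (T : ℤ × ℤ → ℕ) (v : ℕ) (p : ℤ × ℤ) : Prop :=
  T p = v + 1 ∧ T (p.1 - 1, p.2) ≠ v

def FreeC (T : ℤ × ℤ → ℕ) (v : ℕ) (p : ℤ × ℤ) : Prop :=
  FreeI T v p ∨ FreeJ T v p

noncomputable def rnk (T : ℤ × ℤ → ℕ) (v : ℕ) (p : ℤ × ℤ) : ℕ :=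
  {c : ℤ | FreeC T v (p.1, c) ∧ c ≤ p.2}.ncard

noncomputable def acount (T : ℤ × ℤ → ℕ) (v : ℕ) (r : ℤ) : ℕ :=
  {c : ℤ | FreeI T v (r, c)}.ncard

noncomputable def bcount (T : ℤ × ℤ → ℕ) (v : ℕ) (r : ℤ) : ℕ :=
  {c : ℤ | FreeJ T v (r, c)}.ncard

noncomputable def bk (T : ℤ × ℤ → ℕ) (v : ℕ) (p : ℤ × ℤ) : ℕ :=
  if FreeC T v p then (if rnk T v p ≤ bcount T v p.1 then v else v + 1) else T p

section Struct

variable {k n : ℕ} {lam mu : Fin k → ℕ} {d : ℕ} {T : ℤ × ℤ → ℕ} {v : ℕ}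

lemma freeC_val {p : ℤ × ℤ} (h : FreeC T v p) : T p = v ∨ T p = v + 1 := by
  rcases h with h | h
  · exact Or.inl h.1
  · exact Or.inr h.1

lemma freeC_mem (hT : IsCylTableau n lam mu d T) (hv : 1 ≤ v) {p : ℤ × ℤ}
    (h : FreeC T v p) : p ∈ cylDiagram n lam mu (d : ℤ) 0 := by
  rcases freeC_val h with h' | h'
  · exact mem_of_T_eq hT h' hv
  · exact mem_of_T_eq hT h' (by omega)

lemma freeRow_subset (hT : IsCylTableau n lam mu d T) (hv : 1 ≤ v) (r : ℤ) :
    {c : ℤ | FreeC T v (r, c)} ⊆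
      Set.Ioc (loopVal n mu 0 r) (loopVal n lam (d : ℤ) r) := by
  intro c hc
  have := mem_cylD.mp (freeC_mem hT hv hc)
  exact ⟨this.1, this.2⟩

lemma freeRow_finite (hT : IsCylTableau n lam mu d T) (hv : 1 ≤ v) (r : ℤ) :
    {c : ℤ | FreeC T v (r, c)}.Finite :=
  Set.Finite.subset (Set.finite_Ioc _ _) (freeRow_subset hT hv r)

lemma freeI_lt_freeJ (hT : IsCylTableau n lam mu d T) (hv : 1 ≤ v) {r c1 c2 : ℤ}
    (h1 : FreeI T v (r, c1)) (h2 : FreeJ T v (r, c2)) : c1 < c2 := by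
  by_contra h
  push_neg at h
  have m1 : (r, c1) ∈ cylDiagram n lam mu (d : ℤ) 0 := mem_of_T_eq hT h1.1 hv
  have m2 : (r, c2) ∈ cylDiagram n lam mu (d : ℤ) 0 := mem_of_T_eq hT h2.1 (by omega)
  have := row_mono hT m2 m1 h
  rw [h1.1, h2.1] at this
  omega

end Struct

section BKmain

variable {k n : ℕ} {lam mu : Fin k → ℕ} {d : ℕ} {T : ℤ × ℤ → ℕ} {v : ℕ}

lemma mem_cylD' {r0 s0 r c : ℤ} :
    (r, c) ∈ cylDiagram n lam mu r0 s0 ↔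
      loopVal n mu s0 r < c ∧ c ≤ loopVal n lam r0 r := Iff.rfl

lemma locked_prefix (hk : 0 < k) (hkn : k < n)
    (hmu : mu ∈ PknFinset k n) (hT : IsCylTableau n lam mu d T) (hv : 1 ≤ v)
    {r c c' : ℤ} (hb : T (r + 1, c) = v + 1)
    (hc' : T (r, c') = v) (hlt : c' < c) : T (r + 1, c') = v + 1 := by
  have m1 : (r + 1, c) ∈ cylDiagram n lam mu (d : ℤ) 0 := mem_of_T_eq hT hb (by omega)
  have m0' : (r, c') ∈ cylDiagram n lam mu (d : ℤ) 0 := mem_of_T_eq hT hc' hv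
  have m1' : (r + 1, c') ∈ cylDiagram n lam mu (d : ℤ) 0 := by
    rcases mem_cylD'.mp m0' with ⟨a1, b1⟩
    rcases mem_cylD'.mp m1 with ⟨a2, b2⟩
    have hmu1 : loopVal n mu 0 (r + 1) ≤ loopVal n mu 0 r := loopVal_anti_step hk hkn hmu 0 r
    exact mem_cylD'.mpr ⟨by omega, by omega⟩
  have h1 := col_strict hT m0' m1'
  have h2 := row_mono hT m1' m1 (le_of_lt hlt)
  rw [hc'] at h1
  rw [hb] at h2
  omega

lemma locked_suffix (hk : 0 < k) (hkn : k < n) (hlam : lam ∈ PknFinset k n)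
    (hT : IsCylTableau n lam mu d T) (hv : 1 ≤ v)
    {r c c' : ℤ} (ha : T (r - 1, c) = v)
    (hc' : T (r, c') = v + 1) (hlt : c < c') : T (r - 1, c') = v := by
  have m1 : (r - 1, c) ∈ cylDiagram n lam mu (d : ℤ) 0 := mem_of_T_eq hT ha hv
  have m0' : (r, c') ∈ cylDiagram n lam mu (d : ℤ) 0 := mem_of_T_eq hT hc' (by omega)
  have m1' : (r - 1, c') ∈ cylDiagram n lam mu (d : ℤ) 0 := by
    rcases mem_cylD'.mp m1 with ⟨a1, b1⟩
    rcases mem_cylD'.mp m0' with ⟨a2, b2⟩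
    have hlam1 : loopVal n lam (d : ℤ) (r - 1 + 1) ≤ loopVal n lam (d : ℤ) (r - 1) :=
      loopVal_anti_step hk hkn hlam (d : ℤ) (r - 1)
    rw [sub_add_cancel] at hlam1
    exact mem_cylD'.mpr ⟨by omega, by omega⟩
  have h1 : T (r - 1, c') < T (r - 1 + 1, c') := by
    apply col_strict hT m1'
    rw [sub_add_cancel]
    exact m0'
  rw [sub_add_cancel, hc'] at h1
  have h2 := row_mono hT m1 m1' (le_of_lt hlt)
  rw [ha] at h2
  omega

lemma rnk_mono (hT : IsCylTableau n lam mu d T) (hv : 1 ≤ v) {r c1 c2 : ℤ}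
    (hc : c1 ≤ c2) : rnk T v (r, c1) ≤ rnk T v (r, c2) := by
  apply Set.ncard_le_ncard
  · intro c hcc
    exact ⟨hcc.1, le_trans hcc.2 hc⟩
  · exact Set.Finite.subset (freeRow_finite hT hv r) (fun c hc => hc.1)

lemma bk_pair {r c : ℤ} :
    bk T v (r, c) = if FreeC T v (r, c) then
      (if rnk T v (r, c) ≤ bcount T v r then v else v + 1) else T (r, c) := rfl

lemma bk_of_not_free {p : ℤ × ℤ} (h : ¬ FreeC T v p) : bk T v p = T p := if_neg h

lemma bk_free_bounds {p : ℤ × ℤ} (h : FreeC T v p) :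
    v ≤ bk T v p ∧ bk T v p ≤ v + 1 := by
  rw [bk, if_pos h]
  split <;> omega

lemma bk_row_mono (hk : 0 < k) (hkn : k < n) (hlam : lam ∈ PknFinset k n)
    (hmu : mu ∈ PknFinset k n) (hT : IsCylTableau n lam mu d T) (hv : 1 ≤ v)
    {r c1 c2 : ℤ}
    (h1 : (r, c1) ∈ cylDiagram n lam mu (d : ℤ) 0)
    (h2 : (r, c2) ∈ cylDiagram n lam mu (d : ℤ) 0)
    (hc : c1 ≤ c2) : bk T v (r, c1) ≤ bk T v (r, c2) := by
  rcases eq_or_lt_of_le hc with rfl | hlt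
  · exact le_refl _
  have hrowm := row_mono hT h1 h2 hc
  by_cases f1 : FreeC T v (r, c1) <;> by_cases f2 : FreeC T v (r, c2)
  · -- both free
    have hr := rnk_mono hT hv (r := r) hc
    rw [bk_pair, if_pos f1, bk_pair, if_pos f2]
    split <;> split <;> omega
  · -- c1 free, c2 not free
    rw [bk_of_not_free f2]
    have hb1 := bk_free_bounds f1
    have hTp1 : T (r, c1) = v ∨ T (r, c1) = v + 1 := freeC_val f1
    -- T (r,c2) ≥ v
    have hge : v ≤ T (r, c2) := by omega
    rcases Nat.lt_or_ge (T (r, c2)) (v + 1) with hy | hy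
    · -- T (r,c2) = v : show contradiction
      exfalso
      have hy' : T (r, c2) = v := by omega
      have hT1 : T (r, c1) = v := by omega
      have hFI : FreeI T v (r, c1) := by
        rcases f1 with hf | hf
        · exact hf
        · exact absurd hf.1 (by omega)
      have hbelow : T (r + 1, c2) = v + 1 := by
        by_contra hne
        exact f2 (Or.inl ⟨hy', hne⟩)
      exact hFI.2 (locked_prefix hk hkn hmu hT hv hbelow hT1 hlt)
    · omega
  · -- c1 not free, c2 free
    rw [bk_of_not_free f1]
    have hb2 := bk_free_bounds f2
    have hTp2 : T (r, c2) = v ∨ T (r, c2) = v + 1 := freeC_val f2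
    rcases Nat.lt_or_ge (T (r, c1)) (v + 1) with hx | hx
    · omega
    · -- T (r,c1) = v + 1, locked; c2 free with T = v + 1 : contradiction
      exfalso
      have hx' : T (r, c1) = v + 1 := by omega
      have hT2 : T (r, c2) = v + 1 := by omega
      have hFJ : FreeJ T v (r, c2) := by
        rcases f2 with hf | hf
        · exact absurd hf.1 (by omega)
        · exact hf
      have habove : T (r - 1, c1) = v := by
        by_contra hne
        exact f1 (Or.inr ⟨hx', hne⟩)
      exact hFJ.2 (locked_suffix hk hkn hlam hT hv habove hT2 hlt)
  · rw [bk_of_not_free f1, bk_of_not_free f2]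
    exact hrowm

lemma bk_col_strict (hT : IsCylTableau n lam mu d T) (hv : 1 ≤ v) {r c : ℤ}
    (h1 : (r, c) ∈ cylDiagram n lam mu (d : ℤ) 0)
    (h2 : (r + 1, c) ∈ cylDiagram n lam mu (d : ℤ) 0) :
    bk T v (r, c) < bk T v (r + 1, c) := by
  have hxy := col_strict hT h1 h2
  by_cases f1 : FreeC T v (r, c) <;> by_cases f2 : FreeC T v (r + 1, c)
  · -- both free : then T (r,c) = v, T (r+1,c) = v+1, contradiction with freeness
    exfalso
    have hv1 := freeC_val f1
    have hv2 := freeC_val f2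
    have hT1 : T (r, c) = v := by omega
    have hT2 : T (r + 1, c) = v + 1 := by omega
    rcases f1 with hf | hf
    · exact hf.2 hT2
    · exact absurd hf.1 (by omega)
  · -- (r,c) free, (r+1,c) not free
    have hb1 := bk_free_bounds f1
    rw [bk_of_not_free f2]
    have hv1 := freeC_val f1
    rcases Nat.lt_or_ge (T (r + 1, c)) (v + 2) with hy | hy
    · -- T (r+1,c) ≤ v+1, so = v+1 (since > T(r,c) ≥ v); then (r,c) locked or contradiction
      have hT2 : T (r + 1, c) = v + 1 := by omega
      exfalso
      rcases f1 with hf | hf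
      · exact hf.2 hT2
      · have := hf.1; omega
    · omega
  · -- (r,c) not free, (r+1,c) free
    have hb2 := bk_free_bounds f2
    rw [bk_of_not_free f1]
    have hv2 := freeC_val f2
    rcases Nat.lt_or_ge (T (r, c)) v with hx | hx
    · omega
    · -- T (r,c) ≥ v and < T(r+1,c) ≤ v+1 so T (r,c) = v, T(r+1,c) = v+1
      exfalso
      have hT1 : T (r, c) = v := by omega
      have hT2 : T (r + 1, c) = v + 1 := by omega
      have hFJ : FreeJ T v (r + 1, c) := by
        rcases f2 with hf | hf
        · exact absurd hf.1 (by omega)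
        · exact hf
      apply hFJ.2
      show T (r + 1 - 1, c) = v
      rw [add_sub_cancel_right]
      exact hT1
  · rw [bk_of_not_free f1, bk_of_not_free f2]
    exact hxy

end BKmain

section BKshift

variable {k n : ℕ} {lam mu : Fin k → ℕ} {d : ℕ} {T : ℤ × ℤ → ℕ} {v : ℕ}

lemma T_shift (hT : IsCylTableau n lam mu d T) (a b : ℤ) :
    T (a - (k : ℤ), b + ((n : ℤ) - (k : ℤ))) = T (a, b) := hT.2.1 (a, b)

lemma freeI_shift (hT : IsCylTableau n lam mu d T) (r c : ℤ) :
    FreeI T v (r - (k : ℤ), c + ((n : ℤ) - (k : ℤ))) ↔ FreeI T v (r, c) := by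
  unfold FreeI
  have h2 : T (r - (k : ℤ) + 1, c + ((n : ℤ) - (k : ℤ))) = T (r + 1, c) := by
    have he : r - (k : ℤ) + 1 = (r + 1) - (k : ℤ) := by ring
    rw [he]
    exact T_shift hT (r + 1) c
  simp only
  rw [T_shift hT r c, h2]

lemma freeJ_shift (hT : IsCylTableau n lam mu d T) (r c : ℤ) :
    FreeJ T v (r - (k : ℤ), c + ((n : ℤ) - (k : ℤ))) ↔ FreeJ T v (r, c) := by
  unfold FreeJ
  have h2 : T (r - (k : ℤ) - 1, c + ((n : ℤ) - (k : ℤ))) = T (r - 1, c) := by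
    have he : r - (k : ℤ) - 1 = (r - 1) - (k : ℤ) := by ring
    rw [he]
    exact T_shift hT (r - 1) c
  simp only
  rw [T_shift hT r c, h2]

lemma freeC_shift (hT : IsCylTableau n lam mu d T) (r c : ℤ) :
    FreeC T v (r - (k : ℤ), c + ((n : ℤ) - (k : ℤ))) ↔ FreeC T v (r, c) := by
  unfold FreeC
  rw [freeI_shift hT, freeJ_shift hT]

lemma shift_set_eq {P : ℤ × ℤ → Prop}
    (hP : ∀ r c : ℤ, P (r - (k : ℤ), c + ((n : ℤ) - (k : ℤ))) ↔ P (r, c)) (r : ℤ) :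
    {c : ℤ | P (r - (k : ℤ), c)} =
      (fun c => c + ((n : ℤ) - (k : ℤ))) '' {c : ℤ | P (r, c)} := by
  ext c
  simp only [Set.mem_setOf_eq, Set.mem_image]
  constructor
  · intro h
    refine ⟨c - ((n : ℤ) - (k : ℤ)), ?_, by ring⟩
    have := hP r (c - ((n : ℤ) - (k : ℤ)))
    rw [sub_add_cancel] at this
    exact this.mp h
  · rintro ⟨x, hx, rfl⟩
    exact (hP r x).mpr hx

lemma bcount_shift (hT : IsCylTableau n lam mu d T) (r : ℤ) :
    bcount T v (r - (k : ℤ)) = bcount T v r := by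
  unfold bcount
  rw [shift_set_eq (fun r c => freeJ_shift hT r c) r,
    Set.ncard_image_of_injective _ (add_left_injective _)]

lemma rnk_shift (hT : IsCylTableau n lam mu d T) (r c : ℤ) :
    rnk T v (r - (k : ℤ), c + ((n : ℤ) - (k : ℤ))) = rnk T v (r, c) := by
  unfold rnk
  simp only
  have hset : {c' : ℤ | FreeC T v (r - (k : ℤ), c') ∧ c' ≤ c + ((n : ℤ) - (k : ℤ))} =
      (fun x => x + ((n : ℤ) - (k : ℤ))) '' {c' : ℤ | FreeC T v (r, c') ∧ c' ≤ c} := by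
    ext c'
    simp only [Set.mem_setOf_eq, Set.mem_image]
    constructor
    · rintro ⟨h1, h2⟩
      refine ⟨c' - ((n : ℤ) - (k : ℤ)), ⟨?_, by omega⟩, by ring⟩
      have := freeC_shift (v := v) hT r (c' - ((n : ℤ) - (k : ℤ)))
      rw [sub_add_cancel] at this
      exact this.mp h1
    · rintro ⟨x, ⟨h1, h2⟩, rfl⟩
      exact ⟨(freeC_shift hT r x).mpr h1, by omega⟩
  rw [hset, Set.ncard_image_of_injective _ (add_left_injective _)]

lemma bk_shift (hT : IsCylTableau n lam mu d T) (r c : ℤ) :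
    bk T v (r - (k : ℤ), c + ((n : ℤ) - (k : ℤ))) = bk T v (r, c) := by
  rw [bk_pair, bk_pair, rnk_shift hT, bcount_shift hT, T_shift hT]
  by_cases h : FreeC T v (r, c)
  · rw [if_pos ((freeC_shift hT r c).mpr h), if_pos h]
  · rw [if_neg (fun hc => h ((freeC_shift hT r c).mp hc)), if_neg h]

lemma bk_isTableau (hk : 0 < k) (hkn : k < n) (hlam : lam ∈ PknFinset k n)
    (hmu : mu ∈ PknFinset k n) (hT : IsCylTableau n lam mu d T) (hv : 1 ≤ v) :
    IsCylTableau n lam mu d (bk T v) := by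
  refine ⟨?_, ?_, ?_, ?_⟩
  · intro p
    by_cases h : FreeC T v p
    · constructor
      · intro _
        have := bk_free_bounds (T := T) h
        omega
      · intro _
        exact freeC_mem hT hv h
    · rw [bk_of_not_free h]
      exact hT.1 p
  · intro p
    exact bk_shift hT p.1 p.2
  · intro p hp hp2
    exact bk_row_mono hk hkn hlam hmu hT hv hp hp2 (by omega)
  · intro p hp hp2
    exact bk_col_strict hT hv hp hp2

end BKshift

section BKinvol

variable {k n : ℕ} {lam mu : Fin k → ℕ} {d : ℕ} {T : ℤ × ℤ → ℕ} {v : ℕ}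

lemma freeC_bk_iff (hT : IsCylTableau n lam mu d T) (hv : 1 ≤ v) (r c : ℤ) :
    FreeC (bk T v) v (r, c) ↔ FreeC T v (r, c) := by
  constructor
  · -- contrapositive of (1)
    intro hF
    by_contra hnf
    have hbkp : bk T v (r, c) = T (r, c) := bk_of_not_free hnf
    have hnI : ¬ FreeI T v (r, c) := fun h => hnf (Or.inl h)
    have hnJ : ¬ FreeJ T v (r, c) := fun h => hnf (Or.inr h)
    rcases hF with hF | hF
    · -- FreeI (bk T v) (r,c) : bk value v at p
      have hTp : T (r, c) = v := by
        have := hF.1; rwa [hbkp] at this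
      have hbelow : T (r + 1, c) = v + 1 := by
        by_contra hne
        exact hnI ⟨hTp, hne⟩
      have hqnf : ¬ FreeC T v (r + 1, c) := by
        rintro (hq | hq)
        · have := hq.1; omega
        · apply hq.2
          show T (r + 1 - 1, c) = v
          rw [add_sub_cancel_right]
          exact hTp
      have : bk T v (r + 1, c) = v + 1 := by rw [bk_of_not_free hqnf, hbelow]
      exact hF.2 this
    · have hTp : T (r, c) = v + 1 := by
        have := hF.1; rwa [hbkp] at this
      have habove : T (r - 1, c) = v := by
        by_contra hne
        exact hnJ ⟨hTp, hne⟩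
      have hqnf : ¬ FreeC T v (r - 1, c) := by
        rintro (hq | hq)
        · apply hq.2
          show T (r - 1 + 1, c) = v + 1
          rw [sub_add_cancel]
          exact hTp
        · have := hq.1; omega
      have : bk T v (r - 1, c) = v := by rw [bk_of_not_free hqnf, habove]
      exact hF.2 this
  · -- (2) : free stays free
    intro hF
    have hpmem : (r, c) ∈ cylDiagram n lam mu (d : ℤ) 0 := freeC_mem hT hv hF
    have hvals : T (r, c) = v ∨ T (r, c) = v + 1 := freeC_val hF
    have claim1 : bk T v (r + 1, c) ≠ v + 1 := by
      have hbne : T (r + 1, c) ≠ v + 1 := by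
        intro hb
        have hqmem : (r + 1, c) ∈ cylDiagram n lam mu (d : ℤ) 0 :=
          mem_of_T_eq hT hb (by omega)
        have hcs := col_strict hT hpmem hqmem
        have hTp : T (r, c) = v := by omega
        rcases hF with hf | hf
        · exact hf.2 hb
        · have := hf.1; omega
      by_cases hq : FreeC T v (r + 1, c)
      · exfalso
        have hqvals := freeC_val hq
        have hqv : T (r + 1, c) = v := by omega
        have hqmem : (r + 1, c) ∈ cylDiagram n lam mu (d : ℤ) 0 :=
          mem_of_T_eq hT hqv hv
        have hcs := col_strict hT hpmem hqmem
        omega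
      · rw [bk_of_not_free hq]
        exact hbne
    have claim2 : bk T v (r - 1, c) ≠ v := by
      have hane : T (r - 1, c) ≠ v := by
        intro ha
        have hqmem : (r - 1, c) ∈ cylDiagram n lam mu (d : ℤ) 0 :=
          mem_of_T_eq hT ha hv
        have hcs : T (r - 1, c) < T (r - 1 + 1, c) := by
          apply col_strict hT hqmem
          rw [sub_add_cancel]
          exact hpmem
        rw [sub_add_cancel] at hcs
        have hTp : T (r, c) = v + 1 := by omega
        rcases hF with hf | hf
        · have := hf.1; omega
        · exact hf.2 ha
      by_cases hq : FreeC T v (r - 1, c)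
      · exfalso
        have hqvals := freeC_val hq
        have hqv : T (r - 1, c) = v + 1 := by omega
        have hqmem : (r - 1, c) ∈ cylDiagram n lam mu (d : ℤ) 0 :=
          mem_of_T_eq hT hqv (by omega)
        have hcs : T (r - 1, c) < T (r - 1 + 1, c) := by
          apply col_strict hT hqmem
          rw [sub_add_cancel]
          exact hpmem
        rw [sub_add_cancel] at hcs
        have := freeC_val hF
        omega
      · rw [bk_of_not_free hq]
        exact hane
    have hbkv := bk_free_bounds (T := T) hF
    rcases Nat.lt_or_ge (bk T v (r, c)) (v + 1) with hb | hb
    · exact Or.inl ⟨by omega, claim1⟩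
    · exact Or.inr ⟨by omega, claim2⟩

lemma rnk_bk (hT : IsCylTableau n lam mu d T) (hv : 1 ≤ v) (r c : ℤ) :
    rnk (bk T v) v (r, c) = rnk T v (r, c) := by
  unfold rnk
  congr 1
  ext c'
  simp only [Set.mem_setOf_eq]
  rw [freeC_bk_iff hT hv]

/-! counting ranks in finite sets -/

lemma rank_count_set {S : Set ℤ} (hS : S.Finite) (m : ℕ) :
    {x ∈ S | {y ∈ S | y ≤ x}.ncard ≤ m}.ncard = min m S.ncard := by
  classical
  have h1 : ∀ x : ℤ, {y ∈ S | y ≤ x}.ncard = (hS.toFinset.filter (· ≤ x)).card := by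
    intro x
    rw [← Set.ncard_coe_finset]
    congr 1
    ext y
    simp [Set.Finite.mem_toFinset]
  have h2 : {x ∈ S | {y ∈ S | y ≤ x}.ncard ≤ m} =
      ↑(hS.toFinset.filter (fun x => (hS.toFinset.filter (· ≤ x)).card ≤ m)) := by
    ext x
    simp [Set.Finite.mem_toFinset, h1]
  rw [h2, Set.ncard_coe_finset, rank_count, Set.ncard_eq_toFinset_card S hS]

lemma rank_count_set_not {S : Set ℤ} (hS : S.Finite) (m : ℕ) :
    {x ∈ S | ¬ ({y ∈ S | y ≤ x}.ncard ≤ m)}.ncard = S.ncard - min m S.ncard := by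
  have hsub : {x ∈ S | {y ∈ S | y ≤ x}.ncard ≤ m} ⊆ S := fun x hx => hx.1
  have hd : {x ∈ S | ¬ ({y ∈ S | y ≤ x}.ncard ≤ m)}
      = S \ {x ∈ S | {y ∈ S | y ≤ x}.ncard ≤ m} := by
    ext x
    simp only [Set.mem_setOf_eq, Set.mem_diff]
    tauto
  rw [hd, Set.ncard_diff hsub (hS.subset hsub), rank_count_set hS]

end BKinvol

section BKcounts

variable {k n : ℕ} {lam mu : Fin k → ℕ} {d : ℕ} {T : ℤ × ℤ → ℕ} {v : ℕ}

lemma freeI_finite (hT : IsCylTableau n lam mu d T) (hv : 1 ≤ v) (r : ℤ) :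
    {c : ℤ | FreeI T v (r, c)}.Finite :=
  (freeRow_finite hT hv r).subset (fun c hc => Or.inl hc)

lemma freeJ_finite (hT : IsCylTableau n lam mu d T) (hv : 1 ≤ v) (r : ℤ) :
    {c : ℤ | FreeJ T v (r, c)}.Finite :=
  (freeRow_finite hT hv r).subset (fun c hc => Or.inr hc)

lemma S_split (r : ℤ) : {c : ℤ | FreeC T v (r, c)} =
    {c : ℤ | FreeI T v (r, c)} ∪ {c : ℤ | FreeJ T v (r, c)} := rfl

lemma S_card (hT : IsCylTableau n lam mu d T) (hv : 1 ≤ v) (r : ℤ) :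
    {c : ℤ | FreeC T v (r, c)}.ncard = acount T v r + bcount T v r := by
  rw [S_split, Set.ncard_union_eq ?_ (freeI_finite hT hv r) (freeJ_finite hT hv r)]
  · rfl
  · rw [Set.disjoint_left]
    intro c h1 h2
    have := h1.1
    have := h2.1
    simp only [Set.mem_setOf_eq] at *
    omega

lemma rnk_eq_rank (r c : ℤ) :
    rnk T v (r, c) = {y ∈ {c' : ℤ | FreeC T v (r, c')} | y ≤ c}.ncard := rfl

lemma freeI_iff_rnk (hT : IsCylTableau n lam mu d T) (hv : 1 ≤ v) {r c : ℤ}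
    (h : FreeC T v (r, c)) :
    FreeI T v (r, c) ↔ rnk T v (r, c) ≤ acount T v r := by
  constructor
  · intro hI
    apply Set.ncard_le_ncard
    · intro c' hc'
      rcases hc'.1 with h' | h'
      · exact h'
      · exfalso
        have := freeI_lt_freeJ hT hv hI h'
        have := hc'.2
        simp only [Set.mem_setOf_eq] at *
        omega
    · exact freeI_finite hT hv r
  · intro hle
    by_contra hnI
    have hJ : FreeJ T v (r, c) := by
      rcases h with h' | h'
      · exact absurd h' hnI
      · exact h'
    have hsub : insert c {c' : ℤ | FreeI T v (r, c')} ⊆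
        {c' : ℤ | FreeC T v (r, c') ∧ c' ≤ c} := by
      intro c' hc'
      rcases hc' with rfl | hc'
      · exact ⟨Or.inr hJ, le_refl _⟩
      · exact ⟨Or.inl hc', le_of_lt (freeI_lt_freeJ hT hv hc' hJ)⟩
    have hnotmem : c ∉ {c' : ℤ | FreeI T v (r, c')} := by
      intro hc
      have := hc.1
      have := hJ.1
      simp only [Set.mem_setOf_eq] at *
      omega
    have hcard : acount T v r + 1 ≤ rnk T v (r, c) := by
      show {c' : ℤ | FreeI T v (r, c')}.ncard + 1 ≤ rnk T v (r, c)
      rw [← Set.ncard_insert_of_notMem hnotmem (freeI_finite hT hv r)]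
      exact Set.ncard_le_ncard hsub
        ((freeRow_finite hT hv r).subset (fun x hx => hx.1))
    omega

lemma bk_free_val {r c : ℤ} (h : FreeC T v (r, c)) :
    bk T v (r, c) = if rnk T v (r, c) ≤ bcount T v r then v else v + 1 := by
  rw [bk_pair, if_pos h]

lemma freeJ_bk_set (hT : IsCylTableau n lam mu d T) (hv : 1 ≤ v) (r : ℤ) :
    {c : ℤ | FreeJ (bk T v) v (r, c)} =
      {c : ℤ | FreeC T v (r, c) ∧ ¬ (rnk T v (r, c) ≤ bcount T v r)} := by
  ext c
  simp only [Set.mem_setOf_eq]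
  constructor
  · intro h
    have hfree : FreeC T v (r, c) := (freeC_bk_iff hT hv r c).mp (Or.inr h)
    refine ⟨hfree, ?_⟩
    intro hle
    have := h.1
    rw [bk_free_val hfree, if_pos hle] at this
    omega
  · rintro ⟨hfree, hgt⟩
    have hval : bk T v (r, c) = v + 1 := by
      rw [bk_free_val hfree, if_neg hgt]
    have hfree' : FreeC (bk T v) v (r, c) := (freeC_bk_iff hT hv r c).mpr hfree
    rcases hfree' with h' | h'
    · exfalso
      have := h'.1
      omega
    · exact h'

lemma freeI_bk_set (hT : IsCylTableau n lam mu d T) (hv : 1 ≤ v) (r : ℤ) :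
    {c : ℤ | FreeI (bk T v) v (r, c)} =
      {c : ℤ | FreeC T v (r, c) ∧ rnk T v (r, c) ≤ bcount T v r} := by
  ext c
  simp only [Set.mem_setOf_eq]
  constructor
  · intro h
    have hfree : FreeC T v (r, c) := (freeC_bk_iff hT hv r c).mp (Or.inl h)
    refine ⟨hfree, ?_⟩
    by_contra hgt
    have := h.1
    rw [bk_free_val hfree, if_neg hgt] at this
    omega
  · rintro ⟨hfree, hle⟩
    have hval : bk T v (r, c) = v := by
      rw [bk_free_val hfree, if_pos hle]
    have hfree' : FreeC (bk T v) v (r, c) := (freeC_bk_iff hT hv r c).mpr hfree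
    rcases hfree' with h' | h'
    · exact h'
    · exfalso
      have := h'.1
      omega

lemma bcount_bk (hT : IsCylTableau n lam mu d T) (hv : 1 ≤ v) (r : ℤ) :
    bcount (bk T v) v r = acount T v r := by
  unfold bcount
  rw [freeJ_bk_set hT hv r]
  have := rank_count_set_not (freeRow_finite hT hv r) (bcount T v r)
  rw [S_card hT hv r] at this
  have heq : {c : ℤ | FreeC T v (r, c) ∧ ¬ (rnk T v (r, c) ≤ bcount T v r)} =
      {x ∈ {c' : ℤ | FreeC T v (r, c')} |
        ¬ ({y ∈ {c' : ℤ | FreeC T v (r, c')} | y ≤ x}.ncard ≤ bcount T v r)} := rfl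
  rw [heq, this]
  omega

lemma acount_bk (hT : IsCylTableau n lam mu d T) (hv : 1 ≤ v) (r : ℤ) :
    acount (bk T v) v r = bcount T v r := by
  unfold acount
  rw [freeI_bk_set hT hv r]
  have := rank_count_set (freeRow_finite hT hv r) (bcount T v r)
  rw [S_card hT hv r] at this
  have heq : {c : ℤ | FreeC T v (r, c) ∧ rnk T v (r, c) ≤ bcount T v r} =
      {x ∈ {c' : ℤ | FreeC T v (r, c')} |
        {y ∈ {c' : ℤ | FreeC T v (r, c')} | y ≤ x}.ncard ≤ bcount T v r} := rfl
  rw [heq, this]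
  omega

lemma bk_invol (hT : IsCylTableau n lam mu d T) (hv : 1 ≤ v) :
    bk (bk T v) v = T := by
  funext p
  obtain ⟨r, c⟩ := p
  by_cases h : FreeC T v (r, c)
  · have h' : FreeC (bk T v) v (r, c) := (freeC_bk_iff hT hv r c).mpr h
    rw [bk_free_val h', rnk_bk hT hv, bcount_bk hT hv]
    rcases h with hI | hJ
    · rw [if_pos ((freeI_iff_rnk hT hv (Or.inl hI)).mp hI)]
      exact hI.1.symm
    · have hnI : ¬ FreeI T v (r, c) := by
        intro hI
        have := hI.1
        have := hJ.1
        omega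
      rw [if_neg (fun hle => hnI ((freeI_iff_rnk hT hv (Or.inr hJ)).mpr hle))]
      exact hJ.1.symm
  · have h' : ¬ FreeC (bk T v) v (r, c) := fun hc => h ((freeC_bk_iff hT hv r c).mp hc)
    rw [bk_of_not_free h', bk_of_not_free h]

end BKcounts

section BKweights

variable {k n : ℕ} {lam mu : Fin k → ℕ} {d : ℕ} {T : ℤ × ℤ → ℕ} {v : ℕ}

lemma ncard_band {g : ℤ → Set ℤ} (hg : ∀ r, (g r).Finite) (a b : ℤ) :
    {p : ℤ × ℤ | a ≤ p.1 ∧ p.1 ≤ b ∧ p.2 ∈ g p.1}.ncard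
      = ∑ r ∈ Finset.Icc a b, (g r).ncard := by
  classical
  have hinj : ∀ r : ℤ, Function.Injective (fun c : ℤ => ((r, c) : ℤ × ℤ)) := by
    intro r x y h
    exact ((Prod.mk.injEq _ _ _ _).mp h).2
  set F := (Finset.Icc a b).biUnion
    (fun r => ((hg r).toFinset).map ⟨fun c => (r, c), hinj r⟩) with hF
  have hset : {p : ℤ × ℤ | a ≤ p.1 ∧ p.1 ≤ b ∧ p.2 ∈ g p.1} = ↑F := by
    ext ⟨r, c⟩
    simp only [hF, Set.mem_setOf_eq, Finset.coe_biUnion, Set.mem_iUnion, Finset.mem_coe,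
      Finset.mem_map, Set.Finite.mem_toFinset, Finset.mem_Icc, Function.Embedding.coeFn_mk]
    constructor
    · rintro ⟨h1, h2, h3⟩
      exact ⟨r, ⟨h1, h2⟩, c, h3, rfl⟩
    · rintro ⟨r', ⟨h1, h2⟩, c', h3, heq⟩
      have hr : r' = r := congrArg Prod.fst heq
      have hc : c' = c := congrArg Prod.snd heq
      subst hr; subst hc
      exact ⟨h1, h2, h3⟩
  rw [hset, Set.ncard_coe_finset, Finset.card_biUnion]
  · apply Finset.sum_congr rfl
    intro r _
    rw [Finset.card_map, ← Set.ncard_eq_toFinset_card (g r) (hg r)]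
  · intro x _ y _ hxy
    rw [Function.onFun, Finset.disjoint_left]
    intro p hp hp'
    simp only [Finset.mem_map, Set.Finite.mem_toFinset, Function.Embedding.coeFn_mk] at hp hp'
    obtain ⟨c1, _, rfl⟩ := hp
    obtain ⟨c2, _, heq⟩ := hp'
    exact hxy (congrArg Prod.fst heq).symm

lemma rowset_finite (hT : IsCylTableau n lam mu d T) {c0 : ℕ} (hc0 : 1 ≤ c0) (r : ℤ) :
    {c : ℤ | T (r, c) = c0}.Finite := by
  apply (Set.finite_Ioc (loopVal n mu 0 r) (loopVal n lam (d : ℤ) r)).subset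
  intro c hc
  have hm := mem_cylD'.mp (mem_of_T_eq hT hc hc0)
  exact ⟨hm.1, hm.2⟩

lemma cylWeight_eq_sum (f : ℤ × ℤ → ℕ) (c0 : ℕ)
    (hfin : ∀ r : ℤ, {c : ℤ | f (r, c) = c0}.Finite) :
    cylWeight k f c0 = ∑ r ∈ Finset.Icc (1 : ℤ) (k : ℤ), {c : ℤ | f (r, c) = c0}.ncard := by
  rw [cylWeight]
  exact ncard_band (g := fun r => {c : ℤ | f (r, c) = c0}) hfin 1 (k : ℤ)

/-! locked cells -/

def lockIset (T : ℤ × ℤ → ℕ) (v : ℕ) (r : ℤ) : Set ℤ :=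
  {c : ℤ | T (r, c) = v ∧ T (r + 1, c) = v + 1}

def lockJset (T : ℤ × ℤ → ℕ) (v : ℕ) (r : ℤ) : Set ℤ :=
  {c : ℤ | T (r, c) = v + 1 ∧ T (r - 1, c) = v}

lemma lockI_eq_lockJ (r : ℤ) : lockIset T v r = lockJset T v (r + 1) := by
  unfold lockIset lockJset
  ext c
  simp only [Set.mem_setOf_eq, add_sub_cancel_right]
  tauto

lemma lockI_not_free {r c : ℤ} (hv : 1 ≤ v) (h : c ∈ lockIset T v r) :
    ¬ FreeC T v (r, c) := by
  rintro (hf | hf)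
  · exact hf.2 h.2
  · have := hf.1
    have := h.1
    omega

lemma lockJ_not_free {r c : ℤ} (hv : 1 ≤ v) (h : c ∈ lockJset T v r) :
    ¬ FreeC T v (r, c) := by
  rintro (hf | hf)
  · have := hf.1
    have := h.1
    omega
  · exact hf.2 h.2

lemma bk_eq_v_iff (hv : 1 ≤ v) (r c : ℤ) :
    bk T v (r, c) = v ↔
      (c ∈ lockIset T v r ∨ (FreeC T v (r, c) ∧ rnk T v (r, c) ≤ bcount T v r)) := by
  by_cases h : FreeC T v (r, c)
  · rw [bk_free_val h]
    constructor
    · intro hval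
      right
      refine ⟨h, ?_⟩
      by_contra hgt
      rw [if_neg hgt] at hval
      omega
    · rintro (hl | ⟨_, hle⟩)
      · exact absurd h (lockI_not_free hv hl)
      · rw [if_pos hle]
  · rw [bk_of_not_free h]
    constructor
    · intro hval
      left
      refine ⟨hval, ?_⟩
      by_contra hne
      exact h (Or.inl ⟨hval, hne⟩)
    · rintro (hl | ⟨hf, _⟩)
      · exact hl.1
      · exact absurd hf h

lemma bk_eq_v1_iff (hv : 1 ≤ v) (r c : ℤ) :
    bk T v (r, c) = v + 1 ↔
      (c ∈ lockJset T v r ∨ (FreeC T v (r, c) ∧ ¬ (rnk T v (r, c) ≤ bcount T v r))) := by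
  by_cases h : FreeC T v (r, c)
  · rw [bk_free_val h]
    constructor
    · intro hval
      right
      refine ⟨h, ?_⟩
      intro hle
      rw [if_pos hle] at hval
      omega
    · rintro (hl | ⟨_, hgt⟩)
      · exact absurd h (lockJ_not_free hv hl)
      · rw [if_neg hgt]
  · rw [bk_of_not_free h]
    constructor
    · intro hval
      left
      refine ⟨hval, ?_⟩
      by_contra hne
      exact h (Or.inr ⟨hval, hne⟩)
    · rintro (hl | ⟨hf, _⟩)
      · exact hl.1
      · exact absurd hf h

lemma T_eq_v_iff (hv : 1 ≤ v) (r c : ℤ) :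
    T (r, c) = v ↔ (c ∈ lockIset T v r ∨ FreeI T v (r, c)) := by
  constructor
  · intro hval
    by_cases hb : T (r + 1, c) = v + 1
    · exact Or.inl ⟨hval, hb⟩
    · exact Or.inr ⟨hval, hb⟩
  · rintro (h | h)
    · exact h.1
    · exact h.1

lemma T_eq_v1_iff (hv : 1 ≤ v) (r c : ℤ) :
    T (r, c) = v + 1 ↔ (c ∈ lockJset T v r ∨ FreeJ T v (r, c)) := by
  constructor
  · intro hval
    by_cases hb : T (r - 1, c) = v
    · exact Or.inl ⟨hval, hb⟩
    · exact Or.inr ⟨hval, hb⟩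
  · rintro (h | h)
    · exact h.1
    · exact h.1

end BKweights

section BKweights2

variable {k n : ℕ} {lam mu : Fin k → ℕ} {d : ℕ} {T : ℤ × ℤ → ℕ} {v : ℕ}

lemma lockI_finite (hT : IsCylTableau n lam mu d T) (hv : 1 ≤ v) (r : ℤ) :
    (lockIset T v r).Finite :=
  (rowset_finite hT hv r).subset (fun c hc => hc.1)

lemma lockJ_finite (hT : IsCylTableau n lam mu d T) (hv : 1 ≤ v) (r : ℤ) :
    (lockJset T v r).Finite :=
  (rowset_finite hT (show 1 ≤ v + 1 by omega) r).subset (fun c hc => hc.1)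

lemma freeI_bk_finite (hT : IsCylTableau n lam mu d T) (hv : 1 ≤ v) (r : ℤ) :
    {c : ℤ | FreeI (bk T v) v (r, c)}.Finite := by
  rw [freeI_bk_set hT hv r]
  exact (freeRow_finite hT hv r).subset (fun c hc => hc.1)

lemma freeJ_bk_finite (hT : IsCylTableau n lam mu d T) (hv : 1 ≤ v) (r : ℤ) :
    {c : ℤ | FreeJ (bk T v) v (r, c)}.Finite := by
  rw [freeJ_bk_set hT hv r]
  exact (freeRow_finite hT hv r).subset (fun c hc => hc.1)

lemma count_bk_v (hT : IsCylTableau n lam mu d T) (hv : 1 ≤ v) (r : ℤ) :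
    {c : ℤ | bk T v (r, c) = v}.ncard = (lockIset T v r).ncard + bcount T v r := by
  have hiff := fun c => Set.ext_iff.mp (freeI_bk_set hT hv r) c
  simp only [Set.mem_setOf_eq] at hiff
  have hset : {c : ℤ | bk T v (r, c) = v} =
      lockIset T v r ∪ {c : ℤ | FreeI (bk T v) v (r, c)} := by
    ext c
    simp only [Set.mem_setOf_eq, Set.mem_union]
    rw [bk_eq_v_iff hv, hiff c]
  have hdisj : Disjoint (lockIset T v r) {c : ℤ | FreeI (bk T v) v (r, c)} := by
    rw [Set.disjoint_left]
    intro c h1 h2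
    exact lockI_not_free hv h1 (((hiff c).mp h2).1)
  rw [hset, Set.ncard_union_eq hdisj (lockI_finite hT hv r) (freeI_bk_finite hT hv r)]
  rw [show {c : ℤ | FreeI (bk T v) v (r, c)}.ncard = acount (bk T v) v r from rfl,
    acount_bk hT hv r]

lemma count_bk_v1 (hT : IsCylTableau n lam mu d T) (hv : 1 ≤ v) (r : ℤ) :
    {c : ℤ | bk T v (r, c) = v + 1}.ncard = (lockJset T v r).ncard + acount T v r := by
  have hiff := fun c => Set.ext_iff.mp (freeJ_bk_set hT hv r) c
  simp only [Set.mem_setOf_eq] at hiff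
  have hset : {c : ℤ | bk T v (r, c) = v + 1} =
      lockJset T v r ∪ {c : ℤ | FreeJ (bk T v) v (r, c)} := by
    ext c
    simp only [Set.mem_setOf_eq, Set.mem_union]
    rw [bk_eq_v1_iff hv, hiff c]
  have hdisj : Disjoint (lockJset T v r) {c : ℤ | FreeJ (bk T v) v (r, c)} := by
    rw [Set.disjoint_left]
    intro c h1 h2
    exact lockJ_not_free hv h1 (((hiff c).mp h2).1)
  rw [hset, Set.ncard_union_eq hdisj (lockJ_finite hT hv r) (freeJ_bk_finite hT hv r)]
  rw [show {c : ℤ | FreeJ (bk T v) v (r, c)}.ncard = bcount (bk T v) v r from rfl,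
    bcount_bk hT hv r]

lemma count_T_v (hT : IsCylTableau n lam mu d T) (hv : 1 ≤ v) (r : ℤ) :
    {c : ℤ | T (r, c) = v}.ncard = (lockIset T v r).ncard + acount T v r := by
  have hset : {c : ℤ | T (r, c) = v} =
      lockIset T v r ∪ {c : ℤ | FreeI T v (r, c)} := by
    ext c
    simp only [Set.mem_setOf_eq, Set.mem_union]
    exact T_eq_v_iff hv r c
  have hdisj : Disjoint (lockIset T v r) {c : ℤ | FreeI T v (r, c)} := by
    rw [Set.disjoint_left]
    intro c h1 h2
    exact lockI_not_free hv h1 (Or.inl h2)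
  rw [hset, Set.ncard_union_eq hdisj (lockI_finite hT hv r) (freeI_finite hT hv r)]
  rfl

lemma count_T_v1 (hT : IsCylTableau n lam mu d T) (hv : 1 ≤ v) (r : ℤ) :
    {c : ℤ | T (r, c) = v + 1}.ncard = (lockJset T v r).ncard + bcount T v r := by
  have hset : {c : ℤ | T (r, c) = v + 1} =
      lockJset T v r ∪ {c : ℤ | FreeJ T v (r, c)} := by
    ext c
    simp only [Set.mem_setOf_eq, Set.mem_union]
    exact T_eq_v1_iff hv r c
  have hdisj : Disjoint (lockJset T v r) {c : ℤ | FreeJ T v (r, c)} := by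
    rw [Set.disjoint_left]
    intro c h1 h2
    exact lockJ_not_free hv h1 (Or.inr h2)
  rw [hset, Set.ncard_union_eq hdisj (lockJ_finite hT hv r) (freeJ_finite hT hv r)]
  rfl

lemma lockJ_shift (hT : IsCylTableau n lam mu d T) (r : ℤ) :
    (lockJset T v (r - (k : ℤ))).ncard = (lockJset T v r).ncard := by
  have hP : ∀ r' c' : ℤ,
      (T (r' - (k : ℤ), c' + ((n : ℤ) - (k : ℤ))) = v + 1 ∧
        T (r' - (k : ℤ) - 1, c' + ((n : ℤ) - (k : ℤ))) = v) ↔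
      (T (r', c') = v + 1 ∧ T (r' - 1, c') = v) := by
    intro r' c'
    have h2 : T (r' - (k : ℤ) - 1, c' + ((n : ℤ) - (k : ℤ))) = T (r' - 1, c') := by
      have he : r' - (k : ℤ) - 1 = (r' - 1) - (k : ℤ) := by ring
      rw [he]
      exact T_shift hT (r' - 1) c'
    rw [T_shift hT r' c', h2]
  have := shift_set_eq (k := k) (n := n)
    (P := fun p => T p = v + 1 ∧ T (p.1 - 1, p.2) = v) (fun r' c' => hP r' c') r
  have hset : lockJset T v (r - (k : ℤ)) =
      (fun c => c + ((n : ℤ) - (k : ℤ))) '' lockJset T v r := this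
  rw [hset, Set.ncard_image_of_injective _ (add_left_injective _)]

lemma sum_lock (hk0 : 0 < k) (hT : IsCylTableau n lam mu d T) (hv : 1 ≤ v) :
    ∑ r ∈ Finset.Icc (1 : ℤ) (k : ℤ), (lockIset T v r).ncard
      = ∑ r ∈ Finset.Icc (1 : ℤ) (k : ℤ), (lockJset T v r).ncard := by
  have hstep : ∑ r ∈ Finset.Icc (1 : ℤ) (k : ℤ), (lockIset T v r).ncard
      = ∑ r ∈ Finset.Icc (2 : ℤ) ((k : ℤ) + 1), (lockJset T v r).ncard := by
    rw [show ((2 : ℤ)) = 1 + 1 from rfl, ← Finset.map_add_right_Icc (1 : ℤ) (k : ℤ) 1,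
      Finset.sum_map]
    apply Finset.sum_congr rfl
    intro r _
    rw [lockI_eq_lockJ]
    rfl
  rw [hstep]
  have hk1 : (1 : ℤ) ≤ (k : ℤ) := by exact_mod_cast hk0
  have htop : Finset.Icc (2 : ℤ) ((k : ℤ) + 1) = insert ((k : ℤ) + 1) (Finset.Icc 2 (k : ℤ)) := by
    ext x
    simp only [Finset.mem_Icc, Finset.mem_insert]
    omega
  have hbot : Finset.Icc (1 : ℤ) (k : ℤ) = insert 1 (Finset.Icc 2 (k : ℤ)) := by
    ext x
    simp only [Finset.mem_Icc, Finset.mem_insert]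
    omega
  rw [htop, hbot, Finset.sum_insert (by simp), Finset.sum_insert (by simp)]
  congr 1
  have := lockJ_shift (v := v) hT ((k : ℤ) + 1)
  rw [show (k : ℤ) + 1 - (k : ℤ) = 1 by ring] at this
  exact this.symm

lemma bk_eq_other_iff {c0 : ℕ} (hne : c0 ≠ v) (hne1 : c0 ≠ v + 1) (p : ℤ × ℤ) :
    bk T v p = c0 ↔ T p = c0 := by
  by_cases h : FreeC T v p
  · have h1 := bk_free_bounds (T := T) h
    have h2 := freeC_val h
    constructor <;> intro <;> omega
  · rw [bk_of_not_free h]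

lemma cylWeight_bk_other (c0 : ℕ) (hne : c0 ≠ v) (hne1 : c0 ≠ v + 1) :
    cylWeight k (bk T v) c0 = cylWeight k T c0 := by
  unfold cylWeight
  congr 1
  ext p
  simp only [Set.mem_setOf_eq]
  rw [bk_eq_other_iff hne hne1]

lemma cylWeight_bk_v (hk0 : 0 < k) (hkn : k < n) (hlam : lam ∈ PknFinset k n)
    (hmu : mu ∈ PknFinset k n) (hT : IsCylTableau n lam mu d T) (hv : 1 ≤ v) :
    cylWeight k (bk T v) v = cylWeight k T (v + 1) := by
  have hT' := bk_isTableau hk0 hkn hlam hmu hT hv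
  rw [cylWeight_eq_sum (bk T v) v (fun r => rowset_finite hT' hv r),
    cylWeight_eq_sum T (v + 1) (fun r => rowset_finite hT (by omega) r),
    Finset.sum_congr rfl (fun r _ => count_bk_v hT hv r),
    Finset.sum_congr rfl (fun r _ => count_T_v1 hT hv r),
    Finset.sum_add_distrib, Finset.sum_add_distrib, sum_lock hk0 hT hv]

lemma cylWeight_bk_v1 (hk0 : 0 < k) (hkn : k < n) (hlam : lam ∈ PknFinset k n)
    (hmu : mu ∈ PknFinset k n) (hT : IsCylTableau n lam mu d T) (hv : 1 ≤ v) :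
    cylWeight k (bk T v) (v + 1) = cylWeight k T v := by
  have hT' := bk_isTableau hk0 hkn hlam hmu hT hv
  rw [cylWeight_eq_sum (bk T v) (v + 1) (fun r => rowset_finite hT' (by omega) r),
    cylWeight_eq_sum T v (fun r => rowset_finite hT hv r),
    Finset.sum_congr rfl (fun r _ => count_bk_v1 hT hv r),
    Finset.sum_congr rfl (fun r _ => count_T_v hT hv r),
    Finset.sum_add_distrib, Finset.sum_add_distrib, sum_lock hk0 hT hv]

end BKweights2

section Final

variable {k n : ℕ} {lam mu : Fin k → ℕ}

lemma tabCount_swap_adj (hk : 1 ≤ k) (hkn : k < n)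
    (hlam : lam ∈ PknFinset k n) (hmu : mu ∈ PknFinset k n) (d : ℕ) {l : ℕ}
    (beta : Fin l → ℕ) (x y : Fin l) (hxy : (y : ℕ) = (x : ℕ) + 1) :
    tabCount n lam mu d beta = tabCount n lam mu d (beta ∘ Equiv.swap x y) := by
  classical
  have hk0 : 0 < k := hk
  set v : ℕ := (x : ℕ) + 1 with hvdef
  have hv : 1 ≤ v := by omega
  set A : (Fin l → ℕ) → Set ((ℤ × ℤ) → ℕ) := fun β =>
    {T | IsCylTableau n lam mu d T ∧
      (∀ i : Fin l, cylWeight k T ((i : ℕ) + 1) = β i) ∧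
      (∀ c : ℕ, l < c → cylWeight k T c = 0)} with hA
  have htc : ∀ β : Fin l → ℕ, tabCount n lam mu d β = (A β).ncard := fun β => rfl
  have hmaps : ∀ (β : Fin l → ℕ) (T : (ℤ × ℤ) → ℕ), T ∈ A β →
      bk T v ∈ A (β ∘ Equiv.swap x y) := by
    rintro β T ⟨hT, hw, hz⟩
    refine ⟨bk_isTableau hk0 hkn hlam hmu hT hv, ?_, ?_⟩
    · intro i
      by_cases hix : i = x
      · subst hix
        simp only [Function.comp_apply, Equiv.swap_apply_left]
        rw [show (i : ℕ) + 1 = v from rfl, cylWeight_bk_v hk0 hkn hlam hmu hT hv,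
          show v + 1 = (y : ℕ) + 1 by omega]
        exact hw y
      · by_cases hiy : i = y
        · subst hiy
          simp only [Function.comp_apply, Equiv.swap_apply_right]
          rw [show (i : ℕ) + 1 = v + 1 by omega, cylWeight_bk_v1 hk0 hkn hlam hmu hT hv,
            show v = (x : ℕ) + 1 from rfl]
          exact hw x
        · simp only [Function.comp_apply, Equiv.swap_apply_of_ne_of_ne hix hiy]
          rw [cylWeight_bk_other ((i : ℕ) + 1)
            (by intro h; exact hix (Fin.ext (by omega)))
            (by intro h; exact hiy (Fin.ext (by omega)))]
          exact hw i
    · intro c hc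
      have hxl : (x : ℕ) < l := x.isLt
      have hyl : (y : ℕ) < l := y.isLt
      rw [cylWeight_bk_other c (by omega) (by omega)]
      exact hz c hc
  have hswapself : ∀ β : Fin l → ℕ, (β ∘ Equiv.swap x y) ∘ Equiv.swap x y = β := by
    intro β
    funext i
    simp [Equiv.swap_apply_self]
  have himg : A (beta ∘ Equiv.swap x y) = (fun T => bk T v) '' (A beta) := by
    apply Set.Subset.antisymm
    · intro T hTmem
      have h1 : bk T v ∈ A ((beta ∘ Equiv.swap x y) ∘ Equiv.swap x y) := hmaps _ T hTmem
      rw [hswapself] at h1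
      refine ⟨bk T v, h1, ?_⟩
      exact bk_invol hTmem.1 hv
    · rintro _ ⟨T, hTmem, rfl⟩
      exact hmaps beta T hTmem
  rw [htc, htc, himg, Set.ncard_image_of_injOn ?_]
  intro a ha b hb hab
  have : bk (bk a v) v = bk (bk b v) v := by
    simp only at hab
    rw [hab]
  rwa [bk_invol ha.1 hv, bk_invol hb.1 hv] at this

lemma tabCount_swap_any (hk : 1 ≤ k) (hkn : k < n)
    (hlam : lam ∈ PknFinset k n) (hmu : mu ∈ PknFinset k n) (d : ℕ) {l : ℕ} :
    ∀ (m : ℕ) (x y : Fin l), (x : ℕ) < (y : ℕ) → (y : ℕ) - (x : ℕ) = m →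
      ∀ β : Fin l → ℕ, tabCount n lam mu d β = tabCount n lam mu d (β ∘ Equiv.swap x y) := by
  intro m
  induction m using Nat.strong_induction_on with
  | _ m ih =>
    intro x y hlt hdist β
    rcases Nat.lt_or_ge m 2 with hm | hm
    · have hm1 : (y : ℕ) = (x : ℕ) + 1 := by omega
      exact tabCount_swap_adj hk hkn hlam hmu d β x y hm1
    · set z : Fin l := ⟨(y : ℕ) - 1, by omega⟩ with hz
      have hxz : x ≠ z := by
        intro h
        have := congrArg (Fin.val) h
        simp only [hz] at this
        omega
      have hxy' : x ≠ y := by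
        intro h
        have := congrArg (Fin.val) h
        omega
      have hid : Equiv.swap x y = Equiv.swap z y * Equiv.swap x z * Equiv.swap z y := by
        rw [Equiv.swap_mul_swap_mul_swap hxz hxy', Equiv.swap_comm]
      have hzy : (z : ℕ) < (y : ℕ) ∧ (y : ℕ) - (z : ℕ) = 1 := by
        simp only [hz]
        omega
      have hxz' : (x : ℕ) < (z : ℕ) ∧ (z : ℕ) - (x : ℕ) = m - 1 := by
        simp only [hz]
        omega
      have P1 : ∀ β' : Fin l → ℕ, tabCount n lam mu d β'
          = tabCount n lam mu d (β' ∘ Equiv.swap z y) :=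
        fun β' => ih 1 (by omega) z y hzy.1 hzy.2 β'
      have P2 : ∀ β' : Fin l → ℕ, tabCount n lam mu d β'
          = tabCount n lam mu d (β' ∘ Equiv.swap x z) :=
        fun β' => ih (m - 1) (by omega) x z hxz'.1 hxz'.2 β'
      rw [hid]
      have hcomp : β ∘ ⇑(Equiv.swap z y * Equiv.swap x z * Equiv.swap z y)
          = ((β ∘ Equiv.swap z y) ∘ Equiv.swap x z) ∘ Equiv.swap z y := by
        funext i
        rfl
      rw [hcomp, ← P1 _, ← P2 _, ← P1 _]

end Final

end QKaux

/-- The quantum Kostka numbers `K^β_{λ/d/μ}` are invariant under any permutation of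
the entries of the weight vector `β`. -/
theorem quantum_Kostka_symmetric (k n : ℕ) (hk : 1 ≤ k) (hkn : k < n)
    (lam mu : Fin k → ℕ) (hlam : lam ∈ PknFinset k n) (hmu : mu ∈ PknFinset k n)
    (d : ℕ) (l : ℕ) (beta : Fin l → ℕ) (σ : Equiv.Perm (Fin l)) :
    tabCount n lam mu d beta = tabCount n lam mu d (beta ∘ σ) := by
  classical
  suffices H : ∀ τ : Equiv.Perm (Fin l), ∀ β : Fin l → ℕ,
      tabCount n lam mu d β = tabCount n lam mu d (β ∘ τ) by exact H σ beta
  intro τ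
  refine Equiv.Perm.swap_induction_on τ ?_ ?_
  · intro β
    have h1 : β ∘ ⇑(1 : Equiv.Perm (Fin l)) = β := rfl
    rw [h1]
  · intro f a b hab hP β
    have hswap : ∀ γ : Fin l → ℕ,
        tabCount n lam mu d γ = tabCount n lam mu d (γ ∘ Equiv.swap a b) := by
      intro γ
      rcases Nat.lt_trichotomy (a : ℕ) (b : ℕ) with h | h | h
      · exact QKaux.tabCount_swap_any hk hkn hlam hmu d ((b : ℕ) - (a : ℕ)) a b h rfl γ
      · exact absurd (Fin.ext h) hab
      · rw [Equiv.swap_comm]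
        exact QKaux.tabCount_swap_any hk hkn hlam hmu d ((a : ℕ) - (b : ℕ)) b a h rfl γ
    rw [hswap β, hP (β ∘ Equiv.swap a b)]
    congr 1
end

section
/- In QH*(Gr_{kn}), the classes E = σ_{1^k} and H = σ_{(n-k)} satisfy E^n = q^k, H^n = q^{n-k}, E*H = q, and E^{n-k} = H^k = σ_{(n-k)^k} (the class of a point). -/
open Finset

section Core

variable (k : ℕ)

lemma epolyZ_zero : epolyZ k 0 = 1 := by simp [epolyZ]

lemma epolyZ_of_neg {t : ℤ} (ht : t < 0) : epolyZ k t = 0 := by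
  simp only [epolyZ]
  rw [if_neg (by omega), dif_neg (by omega)]

lemma epolyZ_of_gt {t : ℤ} (ht : (k : ℤ) < t) : epolyZ k t = 0 := by
  simp only [epolyZ]
  rw [if_neg (by omega), dif_neg (by omega)]

lemma hpolyD_zero : hpolyD k 0 = 1 := by
  simp [hpolyD, Matrix.det_fin_zero]

lemma hpolyDZ_ofNat (m : ℕ) : hpolyDZ k (m : ℤ) = hpolyD k m := by
  simp [hpolyDZ]

lemma hpolyDZ_of_neg {t : ℤ} (ht : t < 0) : hpolyDZ k t = 0 := by
  simp [hpolyDZ, not_le.mpr ht]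

/-- The minor of the Jacobi–Trudi matrix obtained by deleting row 0 and column `j`. -/
lemma minor_det : ∀ (m : ℕ) (j : Fin (m + 1)),
    Matrix.det (Matrix.of (fun i l : Fin m =>
      epolyZ k ((j.succAbove l : ℤ) - (i : ℤ)))) = hpolyD k (m - j) := by
  intro m
  induction m with
  | zero => intro j; simp [Matrix.det_fin_zero, hpolyD_zero]
  | succ m ih =>
    intro j
    refine Fin.cases ?_ (fun j' => ?_) j
    · -- j = 0
      have hmat : (Matrix.of (fun i l : Fin (m+1) =>
          epolyZ k (((0 : Fin (m+2)).succAbove l : ℤ) - (i : ℤ)))) =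
          (Matrix.of (fun i l : Fin (m+1) => epolyZ k (1 + (l : ℤ) - (i : ℤ)))) := by
        funext i l
        simp only [Matrix.of_apply, Fin.succAbove_zero, Fin.val_succ]
        congr 1
        push_cast
        ring
      rw [hmat]
      simp [hpolyD]
      rfl
    · -- j = j'.succ
      set M : Matrix (Fin (m+1)) (Fin (m+1)) (MvPolynomial (Option (Fin k)) ℤ) :=
        Matrix.of (fun i l : Fin (m+1) =>
          epolyZ k (((j'.succ : Fin (m+2)).succAbove l : ℤ) - (i : ℤ))) with hMdef
      show M.det = _
      rw [Matrix.det_succ_column_zero]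
      have hcol : ∀ i : Fin (m+1), M i 0 = if i = 0 then 1 else 0 := by
        intro i
        have h0 : (j'.succ : Fin (m+2)).succAbove 0 = 0 := Fin.succ_succAbove_zero j'
        simp only [hMdef, Matrix.of_apply, h0]
        rcases eq_or_ne i 0 with rfl | hi
        · simp [epolyZ_zero]
        · rw [if_neg hi]
          apply epolyZ_of_neg
          have : 0 < (i : ℕ) := Fin.pos_iff_ne_zero.mpr hi
          simp only [Fin.val_zero]
          omega
      rw [Finset.sum_eq_single 0]
      · have hsub : M.submatrix (Fin.succAbove 0) Fin.succ =
            Matrix.of (fun a b : Fin m => epolyZ k ((j'.succAbove b : ℤ) - (a : ℤ))) := by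
          funext a b
          simp only [Matrix.submatrix_apply, hMdef, Matrix.of_apply, Fin.succAbove_zero,
            Fin.succ_succAbove_succ, Fin.val_succ]
          congr 1
          push_cast
          ring
        rw [hcol 0, if_pos rfl, hsub, ih j']
        simp [Fin.val_succ, Nat.succ_sub_succ]
      · intro i _ hi
        rw [hcol i, if_neg hi]
        ring
      · intro h; exact absurd (Finset.mem_univ 0) h

end Core
section Rec

variable (k : ℕ)

lemma hpolyD_rec (M : ℕ) : hpolyD k (M + 1) =
    ∑ j : Fin (M + 1), (-1) ^ (j : ℕ) * epolyZ k ((j : ℤ) + 1) * hpolyD k (M - (j : ℕ)) := by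
  have : hpolyD k (M + 1) = Matrix.det
      (Matrix.of (fun i j : Fin (M+1) => epolyZ k (1 + (j : ℤ) - (i : ℤ)))) := rfl
  rw [this, Matrix.det_succ_row_zero]
  refine Finset.sum_congr rfl (fun j _ => ?_)
  have h0 : (Matrix.of (fun i j : Fin (M+1) => epolyZ k (1 + (j : ℤ) - (i : ℤ)))) 0 j
      = epolyZ k ((j : ℤ) + 1) := by
    simp only [Matrix.of_apply, Fin.val_zero]
    congr 1
    ring
  have hsub : (Matrix.of (fun i j : Fin (M+1) =>
        epolyZ k (1 + (j : ℤ) - (i : ℤ)))).submatrix Fin.succ j.succAbove =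
      Matrix.of (fun i l : Fin M => epolyZ k ((j.succAbove l : ℤ) - (i : ℤ))) := by
    funext a b
    simp only [Matrix.submatrix_apply, Matrix.of_apply, Fin.val_succ]
    congr 1
    push_cast
    ring
  rw [h0, hsub, minor_det]

lemma L1Z {m : ℤ} (hm : 1 ≤ m) : hpolyDZ k m =
    ∑ j ∈ Finset.range k, (-1) ^ j * epolyZ k ((j : ℤ) + 1) * hpolyDZ k (m - 1 - (j : ℤ)) := by
  set f : ℕ → MvPolynomial (Option (Fin k)) ℤ :=
    fun j => (-1) ^ j * epolyZ k ((j : ℤ) + 1) * hpolyDZ k (m - 1 - (j : ℤ)) with hf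
  obtain ⟨M, hM⟩ : ∃ M : ℕ, m = ((M : ℤ) + 1) := ⟨(m - 1).toNat, by omega⟩
  have h1 : hpolyDZ k m = ∑ j ∈ Finset.range (M + 1), f j := by
    have : hpolyDZ k m = hpolyD k (M + 1) := by
      rw [hM]; exact_mod_cast hpolyDZ_ofNat k (M + 1)
    rw [this, hpolyD_rec]
    rw [← Fin.sum_univ_eq_sum_range f (M + 1)]
    refine Finset.sum_congr rfl (fun j _ => ?_)
    have hj : (j : ℕ) ≤ M := by omega
    simp only [hf]
    congr 1
    have : m - 1 - (j : ℤ) = ((M - (j : ℕ) : ℕ) : ℤ) := by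
      have := hj
      push_cast [hM]
      omega
    rw [this, hpolyDZ_ofNat]
  have hvan1 : ∀ t, M + 1 ≤ t → f t = 0 := by
    intro t ht
    have : hpolyDZ k (m - 1 - (t : ℤ)) = 0 := by
      apply hpolyDZ_of_neg
      omega
    simp [hf, this]
  have hvan2 : ∀ t, k ≤ t → f t = 0 := by
    intro t ht
    have : epolyZ k ((t : ℤ) + 1) = 0 := by
      apply epolyZ_of_gt
      exact_mod_cast by omega
    simp [hf, this]
  rw [h1]
  have e1 : ∑ j ∈ Finset.range (M + 1), f j = ∑ j ∈ Finset.range (max (M + 1) k), f j := by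
    apply Finset.sum_subset
    · exact Finset.range_subset_range.mpr (le_max_left _ _)
    · intro t _ ht
      exact hvan1 t (by simpa using ht)
  have e2 : ∑ j ∈ Finset.range k, f j = ∑ j ∈ Finset.range (max (M + 1) k), f j := by
    apply Finset.sum_subset
    · exact Finset.range_subset_range.mpr (le_max_right _ _)
    · intro t _ ht
      exact hvan2 t (by simpa using ht)
  rw [e1, ← e2]

end Rec
section Rect

/-- The dual Jacobi–Trudi matrix for the rectangle `(r^k)`. -/
noncomputable def Dmat (k r : ℕ) : Matrix (Fin k) (Fin k) (MvPolynomial (Option (Fin k)) ℤ) :=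
  Matrix.of (fun i j : Fin k => hpolyDZ k ((r : ℤ) + (j : ℤ) - (i : ℤ)))

lemma Dmat_zero_det (k : ℕ) : (Dmat k 0).det = 1 := by
  rw [Matrix.det_of_upperTriangular (M := Dmat k 0)]
  · refine Finset.prod_eq_one (fun i _ => ?_)
    have : ((0 : ℕ) : ℤ) + (i : ℤ) - (i : ℤ) = ((0 : ℕ) : ℤ) := by ring
    simp only [Dmat, Matrix.of_apply, this, hpolyDZ_ofNat, hpolyD_zero]
  · intro i j hji
    simp only [id_eq] at hji
    apply hpolyDZ_of_neg
    have : (j : ℕ) < (i : ℕ) := hji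
    omega

lemma Dmat_step (k' r : ℕ) :
    (Dmat (k' + 1) (r + 1)).det = epolyZ (k' + 1) ((k' : ℤ) + 1) * (Dmat (k' + 1) r).det := by
  set B : Matrix (Fin (k' + 1)) (Fin (k' + 1)) (MvPolynomial (Option (Fin (k' + 1))) ℤ) :=
    (Dmat (k' + 1) r).submatrix id (finRotate (k' + 1)) with hBdef
  set c : Fin (k' + 1) → MvPolynomial (Option (Fin (k' + 1))) ℤ := fun j =>
    if (j : ℕ) = k' then (-1) ^ k' * epolyZ (k' + 1) ((k' : ℤ) + 1)
    else (-1) ^ (k' - 1 - (j : ℕ)) * epolyZ (k' + 1) ((k' : ℤ) - (j : ℤ)) with hcdef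
  have hrot : ∀ j : Fin (k' + 1), ((finRotate (k' + 1) j : Fin (k' + 1)) : ℕ) =
      if j = Fin.last k' then 0 else (j : ℕ) + 1 := by
    intro j
    rw [finRotate_succ_apply, Fin.val_add_one]
  have hB : ∀ i j : Fin (k' + 1), B i j =
      hpolyDZ (k' + 1) ((r : ℤ) + ((finRotate (k' + 1) j : Fin (k' + 1)) : ℕ) - (i : ℤ)) := by
    intro i j
    simp [hBdef, Dmat]
  -- the key pointwise linear-combination identity for the last column
  have key : ∀ i : Fin (k' + 1), (∑ j : Fin (k' + 1), c j • B i j) =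
      hpolyDZ (k' + 1) ((r : ℤ) + 1 + (k' : ℤ) - (i : ℤ)) := by
    intro i
    set m : ℤ := (r : ℤ) + 1 + (k' : ℤ) - (i : ℤ) with hm
    have hm1 : 1 ≤ m := by
      have : (i : ℕ) ≤ k' := Fin.is_le i
      omega
    rw [L1Z (k' + 1) hm1]
    rw [Finset.sum_range_succ, Fin.sum_univ_castSucc]
    congr 1
    · -- sums over the first k' columns
      rw [← Finset.sum_range_reflect]
      rw [← Fin.sum_univ_eq_sum_range
        (fun t => (-1) ^ (k' - 1 - t) * epolyZ (k' + 1) (((k' - 1 - t : ℕ) : ℤ) + 1) *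
          hpolyDZ (k' + 1) (m - 1 - ((k' - 1 - t : ℕ) : ℤ))) k']
      refine Finset.sum_congr rfl (fun j _ => ?_)
      have hjlt : (j : ℕ) < k' := j.isLt
      have hne : j.castSucc ≠ Fin.last k' := by
        intro h
        have := congrArg (fun x : Fin (k' + 1) => (x : ℕ)) h
        simp at this
        omega
      rw [hB, hrot, if_neg hne]
      have hval : ((j.castSucc : Fin (k' + 1)) : ℕ) = (j : ℕ) := rfl
      simp only [hcdef, hval, if_neg (by omega : ¬ (j : ℕ) = k'), smul_eq_mul]
      have e1 : ((k' - 1 - (j : ℕ) : ℕ) : ℤ) + 1 = (k' : ℤ) - (j : ℤ) := by omega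
      have e2 : m - 1 - ((k' - 1 - (j : ℕ) : ℕ) : ℤ) = (r : ℤ) + (((j : ℕ) + 1 : ℕ) : ℤ) - (i : ℤ) := by
        push_cast
        omega
      rw [e1, e2]
    · -- the last column term
      rw [hB, hrot, if_pos rfl]
      have hlast : ((Fin.last k' : Fin (k' + 1)) : ℕ) = k' := rfl
      simp only [hcdef, hlast, if_pos rfl, smul_eq_mul]
      have e2 : m - 1 - (k' : ℤ) = (r : ℤ) + ((0 : ℕ) : ℤ) - (i : ℤ) := by omega
      rw [e2]
      push_cast
      ring
  have hupd : Dmat (k' + 1) (r + 1) =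
      B.updateCol (Fin.last k') (fun i => ∑ j : Fin (k' + 1), c j • B i j) := by
    funext i j
    rw [Matrix.updateCol_apply]
    by_cases hj : j = Fin.last k'
    · rw [if_pos hj, key i, hj]
      simp only [Dmat, Matrix.of_apply]
      congr 1
    · rw [if_neg hj, hB, hrot, if_neg hj]
      simp only [Dmat, Matrix.of_apply]
      congr 1
      push_cast
      ring
  rw [hupd, Matrix.det_updateCol_sum]
  have hsign : B.det = ((-1 : MvPolynomial (Option (Fin (k' + 1))) ℤ) ^ k') * (Dmat (k' + 1) r).det := by
    rw [hBdef, Matrix.det_permute', sign_finRotate]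
    norm_num
  have hclast : c (Fin.last k') = (-1) ^ k' * epolyZ (k' + 1) ((k' : ℤ) + 1) := by
    simp [hcdef]
  rw [smul_eq_mul, hclast, hsign, mul_mul_mul_comm]
  rw [show ((-1 : MvPolynomial (Option (Fin (k' + 1))) ℤ) ^ k') * (-1) ^ k' = 1 by
    rw [← pow_add]; exact Even.neg_one_pow ⟨k', rfl⟩]
  rw [one_mul]

lemma Dmat_det (k' r : ℕ) : (Dmat (k' + 1) r).det = epolyZ (k' + 1) ((k' : ℤ) + 1) ^ r := by
  induction r with
  | zero => simpa using Dmat_zero_det (k' + 1)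
  | succ r ih => rw [Dmat_step, ih, pow_succ]; ring

end Rect
section Main

lemma hClass_mem_zero (k n m : ℕ) (h1 : n - k < m) (h2 : m < n) :
    hClass k n m = 0 := by
  rw [hClass, Ideal.Quotient.eq_zero_iff_mem]
  apply Ideal.subset_span
  exact Or.inl ⟨m, ⟨h1, h2⟩, rfl⟩

lemma hClass_top (k n : ℕ) :
    hClass k n n = -(((-1 : QHRing k n) ^ k) * qClass k n) := by
  have hmem : hpolyD k n + ((-1) ^ k : ℤ) • MvPolynomial.X none ∈ qIdeal k n := by
    apply Ideal.subset_span
    exact Or.inr rfl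
  have h0 : Ideal.Quotient.mk (qIdeal k n) (hpolyD k n + ((-1) ^ k : ℤ) • MvPolynomial.X none)
      = 0 := (Ideal.Quotient.eq_zero_iff_mem).mpr hmem
  rw [map_add, map_zsmul] at h0
  have : (((-1) ^ k : ℤ) : QHRing k n) = (-1 : QHRing k n) ^ k := by push_cast; ring
  rw [hClass, qClass]
  rw [zsmul_eq_mul, this] at h0
  linear_combination h0

lemma eh_eq_q (k n : ℕ) (hk : 1 ≤ k) (hkn : k < n) :
    eClass k n k * hClass k n (n - k) = qClass k n := by
  have hn1 : 1 ≤ (n : ℤ) := by exact_mod_cast Nat.one_le_of_lt hkn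
  have hrec := congrArg (Ideal.Quotient.mk (qIdeal k n)) (L1Z k hn1)
  rw [map_sum] at hrec
  rw [Finset.sum_eq_single (k - 1)] at hrec
  · -- the surviving term
    have harg1 : (((k - 1 : ℕ) : ℤ) + 1) = ((k : ℕ) : ℤ) := by omega
    have harg2 : ((n : ℤ) - 1 - ((k - 1 : ℕ) : ℤ)) = (((n - k : ℕ) : ℕ) : ℤ) := by omega
    rw [harg1, harg2, hpolyDZ_ofNat, hpolyDZ_ofNat] at hrec
    rw [map_mul, map_mul, map_pow, map_neg, map_one] at hrec
    have hrec2 : hClass k n n =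
        (-1 : QHRing k n) ^ (k - 1) * (eClass k n k * hClass k n (n - k)) := by
      rw [hClass, eClass, hClass, ← mul_assoc]
      exact hrec
    have hsq : ((-1 : QHRing k n) ^ (k - 1)) * (-1) ^ (k - 1) = 1 := by
      rw [← pow_add]
      have he : Even ((k - 1) + (k - 1)) := ⟨k - 1, rfl⟩
      exact Even.neg_one_pow (α := QHRing k n) he
    have hcomb : eClass k n k * hClass k n (n - k) = (-1) ^ (k - 1) * hClass k n n := by
      rw [hrec2, ← mul_assoc, hsq, one_mul]
    rw [hcomb, hClass_top]
    have hodd : ((-1 : QHRing k n) ^ (k - 1)) * (-1) ^ k = -1 := by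
      rw [← pow_add]
      have ho : Odd ((k - 1) + k) := ⟨k - 1, by omega⟩
      exact Odd.neg_one_pow (α := QHRing k n) ho
    calc (-1 : QHRing k n) ^ (k - 1) * -((-1) ^ k * qClass k n)
        = -((-1 : QHRing k n) ^ (k - 1) * (-1) ^ k) * qClass k n := by ring
      _ = qClass k n := by rw [hodd]; ring
  · -- other terms vanish
    intro j hj hjne
    have hjlt : j < k := Finset.mem_range.mp hj
    have hjk : j < k - 1 := by omega
    have harg : ((n : ℤ) - 1 - (j : ℤ)) = (((n - 1 - j : ℕ) : ℕ) : ℤ) := by omega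
    rw [harg, hpolyDZ_ofNat, map_mul]
    have : Ideal.Quotient.mk (qIdeal k n) (hpolyD k (n - 1 - j)) = 0 :=
      hClass_mem_zero k n (n - 1 - j) (by omega) (by omega)
    rw [this, mul_zero]
  · intro h
    exact absurd (Finset.mem_range.mpr (by omega)) h

lemma point_class (k n : ℕ) (hk : 1 ≤ k) (hkn : k < n) :
    hClass k n (n - k) ^ k = Ideal.Quotient.mk (qIdeal k n) ((Dmat k (n - k)).det) := by
  rw [RingHom.map_det]
  rw [Matrix.det_of_lowerTriangular]
  · -- product of diagonal entries
    have hdiag : ∀ i : Fin k, (RingHom.mapMatrix (Ideal.Quotient.mk (qIdeal k n))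
        (Dmat k (n - k))) i i = hClass k n (n - k) := by
      intro i
      simp only [RingHom.mapMatrix_apply, Matrix.map_apply, Dmat, Matrix.of_apply]
      have : ((n - k : ℕ) : ℤ) + (i : ℤ) - (i : ℤ) = ((n - k : ℕ) : ℤ) := by ring
      rw [this, hpolyDZ_ofNat, hClass]
    rw [Finset.prod_congr rfl (fun i _ => hdiag i), Finset.prod_const, Finset.card_univ,
      Fintype.card_fin]
  · -- lower triangularity
    intro i j hij
    have hij' : (i : ℕ) < (j : ℕ) := hij
    simp only [RingHom.mapMatrix_apply, Matrix.map_apply, Dmat, Matrix.of_apply]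
    have hj : (j : ℕ) < k := j.isLt
    have harg : ((n - k : ℕ) : ℤ) + (j : ℤ) - (i : ℤ) = (((n - k + (j : ℕ) - (i : ℕ) : ℕ)) : ℤ) := by
      omega
    rw [harg, hpolyDZ_ofNat, Ideal.Quotient.eq_zero_iff_mem]
    apply Ideal.subset_span
    exact Or.inl ⟨n - k + (j : ℕ) - (i : ℕ), ⟨by omega, by omega⟩, rfl⟩

lemma e_pow_class (k n : ℕ) (hk : 1 ≤ k) :
    Ideal.Quotient.mk (qIdeal k n) ((Dmat k (n - k)).det) = eClass k n k ^ (n - k) := by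
  obtain ⟨k', rfl⟩ : ∃ k', k = k' + 1 := ⟨k - 1, by omega⟩
  rw [Dmat_det]
  rw [map_pow]
  have harg : ((k' : ℤ) + 1) = (((k' + 1 : ℕ)) : ℤ) := by push_cast; ring
  rw [harg]
  rfl

lemma sigma_rect (k n : ℕ) :
    sigmaClass k n (fun _ => n - k) = Ideal.Quotient.mk (qIdeal k n) ((Dmat k (n - k)).det) := rfl

theorem E_H_relations_aux (k n : ℕ) (hk : 1 ≤ k) (hkn : k < n) :
    eClass k n k ^ n = qClass k n ^ k ∧
    hClass k n (n - k) ^ n = qClass k n ^ (n - k) ∧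
    eClass k n k * hClass k n (n - k) = qClass k n ∧
    eClass k n k ^ (n - k) = hClass k n (n - k) ^ k ∧
    hClass k n (n - k) ^ k = sigmaClass k n (fun _ => n - k) := by
  have h3 : eClass k n k * hClass k n (n - k) = qClass k n := eh_eq_q k n hk hkn
  have h4 : eClass k n k ^ (n - k) = hClass k n (n - k) ^ k := by
    rw [← e_pow_class k n hk, ← point_class k n hk hkn]
  have h5 : hClass k n (n - k) ^ k = sigmaClass k n (fun _ => n - k) := by
    rw [point_class k n hk hkn, sigma_rect]
  have hnk : (n - k) + k = n := by omega
  refine ⟨?_, ?_, h3, h4, h5⟩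
  · have hsplit : eClass k n k ^ n = eClass k n k ^ (n - k) * eClass k n k ^ k := by
      rw [← pow_add, hnk]
    rw [hsplit, h4, ← mul_pow, mul_comm (hClass k n (n - k)) (eClass k n k), h3]
  · have hsplit : hClass k n (n - k) ^ n
        = hClass k n (n - k) ^ (n - k) * hClass k n (n - k) ^ k := by
      rw [← pow_add, hnk]
    rw [hsplit, ← h4, ← mul_pow, mul_comm (hClass k n (n - k)) (eClass k n k), h3]
end Main

/-- In `QH*(Gr_{kn})` the classes `E = σ_{1^k}` and `H = σ_{(n-k)}` satisfy
`E^n = q^k`, `H^n = q^{n-k}`, `E*H = q`, and `E^{n-k} = H^k = σ_{(n-k)^k}`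
(the class of a point). -/
theorem E_H_relations (k n : ℕ) (hk : 1 ≤ k) (hkn : k < n) :
    eClass k n k ^ n = qClass k n ^ k ∧
    hClass k n (n - k) ^ n = qClass k n ^ (n - k) ∧
    eClass k n k * hClass k n (n - k) = qClass k n ∧
    eClass k n k ^ (n - k) = hClass k n (n - k) ^ k ∧
    hClass k n (n - k) ^ k = sigmaClass k n (fun _ => n - k) :=
  E_H_relations_aux k n hk hkn
end
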